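/- arXiv:math/0311345 — 5 statements merged into one kernel-verified Lean document; each statement's English description precedes it below -/
import Mathlib

section
/- Let g : ℕ → ℝ be additive, i.e. g(1) = 0 and g(mn) = g(m) + g(n) whenever gcd(m,n) = 1. Then for every real x ≥ 1, Σ_{n≤x} g(n) = Σ_{p^ν ≤ x} (g(p^ν) − g(p^{ν−1}))·⌊x/p^ν⌋, where the right-hand sum is over all primes p and integers ν ≥ 1 with p^ν ≤ x. -/
open Filter Finset

lemma additive_factorization_sum (g : ℕ → ℝ) (hg1 : g 1 = 0)
    (hgadd : ∀ m n : ℕ, Nat.gcd m n = 1 → g (m * n) = g m + g n) :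
    ∀ n : ℕ, n ≠ 0 → g n = ∑ p ∈ n.primeFactors, g (p ^ n.factorization p) := by
  intro n
  induction n using Nat.recOnPosPrimePosCoprime with
  | prime_pow p k hp hk =>
    intro _
    rw [Nat.primeFactors_prime_pow hk.ne' hp, Finset.sum_singleton,
      hp.factorization_pow, Finsupp.single_eq_same]
  | zero => intro h; exact absurd rfl h
  | one => intro _; simpa using hg1
  | coprime a b ha hb hab iha ihb =>
    intro _
    have ha0 : a ≠ 0 := by omega
    have hb0 : b ≠ 0 := by omega
    rw [hgadd a b hab, iha ha0, ihb hb0, hab.primeFactors_mul,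
      Finset.sum_union hab.disjoint_primeFactors]
    congr 1
    · refine Finset.sum_congr rfl fun p hp => ?_
      have hpb : p ∉ b.primeFactors :=
        Finset.disjoint_left.mp hab.disjoint_primeFactors hp
      have : b.factorization p = 0 := by
        rwa [← Finsupp.notMem_support_iff, Nat.support_factorization]
      rw [Nat.factorization_mul ha0 hb0, Finsupp.add_apply, this, add_zero]
    · refine Finset.sum_congr rfl fun p hp => ?_
      have hpa : p ∉ a.primeFactors :=
        Finset.disjoint_right.mp hab.disjoint_primeFactors hp
      have : a.factorization p = 0 := by
        rwa [← Finsupp.notMem_support_iff, Nat.support_factorization]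
      rw [Nat.factorization_mul ha0 hb0, Finsupp.add_apply, this, zero_add]

/-- For any additive `g : ℕ → ℝ` and real `x ≥ 1`,
`∑_{n≤x} g(n) = ∑_{p^ν ≤ x} (g(p^ν) − g(p^{ν−1}))·⌊x/p^ν⌋`, the sum running over
all primes `p` and integers `ν ≥ 1` with `p^ν ≤ x`. -/
theorem statement4
    (g : ℕ → ℝ) (hg1 : g 1 = 0)
    (hgadd : ∀ m n : ℕ, Nat.gcd m n = 1 → g (m * n) = g m + g n)
    (x : ℝ) (hx : 1 ≤ x) :
    ∑ n ∈ Finset.Icc 1 ⌊x⌋₊, g n =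
      ∑ p ∈ (Finset.range (⌊x⌋₊ + 1)).filter Nat.Prime,
        ∑ ν ∈ Finset.Icc 1 ⌊x⌋₊,
          if ((p : ℝ) ^ ν ≤ x) then
            (g (p ^ ν) - g (p ^ (ν - 1))) * (⌊x / (p : ℝ) ^ ν⌋ : ℝ)
          else 0 := by
  have hx0 : (0:ℝ) ≤ x := le_trans zero_le_one hx
  set N := ⌊x⌋₊ with hN
  have hN1 : 1 ≤ N := Nat.le_floor (by simpa using hx)
  -- Step 1: rewrite each (p, ν) term as a sum over n
  have key : ∀ p ∈ (Finset.range (N+1)).filter Nat.Prime, ∀ ν ∈ Finset.Icc 1 N,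
      (if ((p:ℝ)^ν ≤ x) then (g (p^ν) - g (p^(ν-1))) * (⌊x / (p:ℝ)^ν⌋ : ℝ) else 0)
      = ∑ n ∈ Finset.Icc 1 N, (if p^ν ∣ n then (g (p^ν) - g (p^(ν-1))) else 0) := by
    intro p hp ν hν
    simp only [Finset.mem_filter, Finset.mem_range] at hp
    have hcast : ((p:ℝ))^ν = ((p^ν : ℕ) : ℝ) := by push_cast; ring
    have hRHS : ∑ n ∈ Finset.Icc 1 N, (if p^ν ∣ n then (g (p^ν) - g (p^(ν-1))) else 0)
        = ((N / p^ν : ℕ) : ℝ) * (g (p^ν) - g (p^(ν-1))) := by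
      rw [← Finset.sum_filter, Finset.sum_const, nsmul_eq_mul]
      congr 2
      have : Finset.Icc 1 N = Finset.Ioc 0 N := rfl
      rw [this, Nat.Ioc_filter_dvd_card_eq_div]
    by_cases h : (p:ℝ)^ν ≤ x
    · rw [if_pos h, hRHS, mul_comm]
      congr 1
      have hdiv0 : (0:ℝ) ≤ x / (p:ℝ)^ν := by
        apply div_nonneg hx0
        positivity
      rw [hcast] at hdiv0 ⊢
      rw [← Int.natCast_floor_eq_floor hdiv0, Nat.floor_div_natCast]
      norm_cast
    · rw [if_neg h, hRHS]
      have hlt : N < p ^ ν := by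
        by_contra hle
        push_neg at hle
        apply h
        calc ((p:ℝ))^ν = ((p^ν : ℕ) : ℝ) := hcast
        _ ≤ (N : ℝ) := by exact_mod_cast hle
        _ ≤ x := Nat.floor_le hx0
      rw [Nat.div_eq_of_lt hlt]
      simp
  rw [Finset.sum_congr rfl (fun p hp => Finset.sum_congr rfl (fun ν hν => key p hp ν hν))]
  rw [Finset.sum_congr rfl (fun p _ => Finset.sum_comm), Finset.sum_comm]
  refine Finset.sum_congr rfl fun n hn => ?_
  simp only [Finset.mem_Icc] at hn
  have hn0 : n ≠ 0 := by omega
  -- inner sum over ν telescopes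
  have inner : ∀ p : ℕ, p.Prime →
      ∑ ν ∈ Finset.Icc 1 N, (if p^ν ∣ n then (g (p^ν) - g (p^(ν-1))) else 0)
      = g (p ^ n.factorization p) := by
    intro p hp
    have hvN : n.factorization p ≤ N :=
      le_trans (le_of_lt (Nat.factorization_lt p hn0)) hn.2
    have hfilter : (Finset.Icc 1 N).filter (fun ν => p^ν ∣ n)
        = Finset.Icc 1 (n.factorization p) := by
      ext ν
      simp only [Finset.mem_filter, Finset.mem_Icc,
        hp.pow_dvd_iff_le_factorization hn0]
      omega
    rw [← Finset.sum_filter, hfilter, ← Finset.Ico_add_one_right_eq_Icc,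
      Finset.sum_Ico_eq_sum_range]
    have : ∀ i, g (p ^ (1 + i)) - g (p ^ (1 + i - 1)) = g (p ^ (i+1)) - g (p ^ i) := by
      intro i
      rw [add_comm 1 i, Nat.add_sub_cancel]
    rw [Finset.sum_congr rfl (fun i _ => this i)]
    simp only [Nat.add_sub_cancel]
    rw [Finset.sum_range_sub (fun i => g (p ^ i))]
    simp [hg1]
  rw [Finset.sum_congr rfl (fun p hp => inner p (Finset.mem_filter.mp hp).2)]
  rw [additive_factorization_sum g hg1 hgadd n hn0]
  apply Finset.sum_subset
  · intro p hp
    have hpp := Nat.prime_of_mem_primeFactors hp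
    have hpn : p ≤ n := Nat.le_of_dvd (Nat.pos_of_ne_zero hn0)
      (Nat.dvd_of_mem_primeFactors hp)
    simp only [Finset.mem_filter, Finset.mem_range]
    exact ⟨by omega, hpp⟩
  · intro p _ hp
    have : n.factorization p = 0 := by
      rwa [← Finsupp.notMem_support_iff, Nat.support_factorization]
    rw [this, pow_zero, hg1]
end

section
/- Let L be slowly varying, let ρ ∈ ℝ, and put h(p) = p^ρ L(p). Define f(n) = Σ_{p|n} h(p) (sum over distinct prime divisors p of n) and F(n) = Σ_{p^α||n} α·h(p) (where p^α||n means p^α | n but p^{α+1} ∤ n). Then for every ε > 0, Σ_{n≤x} (F(n) − f(n)) = O_ε( max(x, x^{(ρ+1)/2 + ε}) ) as x → ∞. -/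
open Filter Finset


lemma potter (x₀ : ℝ) (hx₀ : 0 < x₀) (L : ℝ → ℝ)
    (hLpos : ∀ x, x₀ ≤ x → 0 < L x)
    (hLcont : ContinuousOn L (Set.Ici x₀))
    (hLslow : ∀ c : ℝ, 0 < c → Tendsto (fun x : ℝ => L (c * x) / L x) atTop (nhds 1))
    (ε : ℝ) (hε : 0 < ε) :
    ∃ C, 0 < C ∧ ∃ X, x₀ ≤ X ∧ ∀ y, X ≤ y → L y ≤ C * y ^ ε := by
  have h2 : (1:ℝ) < 2 ^ ε :=
    Real.one_lt_rpow_iff_of_pos (by norm_num) |>.2 (Or.inl ⟨by norm_num, hε⟩)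
  obtain ⟨X₁, hX₁⟩ := eventually_atTop.mp ((hLslow 2 (by norm_num)).eventually_lt_const h2)
  set X := max X₁ x₀ with hXdef
  have hXx₀ : x₀ ≤ X := le_max_right _ _
  have hXpos : 0 < X := lt_of_lt_of_le hx₀ hXx₀
  -- doubling bound
  have hdbl : ∀ y, X ≤ y → L (2 * y) ≤ 2 ^ ε * L y := by
    intro y hy
    have h1 := hX₁ y (le_trans (le_max_left _ _) hy)
    have h2' : 0 < L y := hLpos y (le_trans hXx₀ hy)
    have := (div_lt_iff₀ h2').mp h1
    linarith
  -- sup on [X, 2X]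
  obtain ⟨z, hz, hzmax⟩ := (isCompact_Icc : IsCompact (Set.Icc X (2*X))).exists_isMaxOn
    ⟨X, le_refl X, by linarith⟩
    (hLcont.mono (fun w hw => le_trans hXx₀ hw.1))
  set M₀ := L z with hM₀def
  have hM₀pos : 0 < M₀ := hLpos z (le_trans hXx₀ hz.1)
  have hM₀ : ∀ w, X ≤ w → w ≤ 2*X → L w ≤ M₀ := fun w h1 h2' => hzmax ⟨h1, h2'⟩
  have h2e1 : (1:ℝ) ≤ 2 ^ ε := le_of_lt h2
  -- induction on dyadic scale
  have key : ∀ k : ℕ, ∀ y, X ≤ y → y ≤ X * 2 ^ k → L y ≤ M₀ * ((2:ℝ) ^ ε) ^ k := by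
    intro k
    induction k with
    | zero => intro y h1 h2'
              simp only [pow_zero, mul_one] at h2' ⊢
              exact hM₀ y h1 (by linarith)
    | succ k ih =>
      intro y h1 h2'
      rcases le_or_gt y (2*X) with hc | hc
      · calc L y ≤ M₀ := hM₀ y h1 hc
          _ ≤ M₀ * ((2:ℝ) ^ ε) ^ (k+1) := by
              nlinarith [one_le_pow₀ h2e1 (n := k+1), hM₀pos]
      · have hw1 : X ≤ y / 2 := by linarith
        have hw2 : y / 2 ≤ X * 2 ^ k := by
          rw [div_le_iff₀ (by norm_num)]
          calc y ≤ X * 2 ^ (k+1) := h2'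
            _ = X * 2 ^ k * 2 := by ring
        have := hdbl (y/2) hw1
        have h2y : 2 * (y/2) = y := by ring
        rw [h2y] at this
        calc L y ≤ 2 ^ ε * L (y/2) := this
          _ ≤ 2 ^ ε * (M₀ * ((2:ℝ) ^ ε) ^ k) := by
              have := ih (y/2) hw1 hw2
              nlinarith [Real.rpow_pos_of_pos (by norm_num : (0:ℝ) < 2) ε]
          _ = M₀ * ((2:ℝ) ^ ε) ^ (k+1) := by ring
  refine ⟨M₀ * (2 / X) ^ ε, by positivity, X, hXx₀, ?_⟩
  intro y hy
  have hypos : 0 < y := lt_of_lt_of_le hXpos hy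
  have hyX1 : 1 ≤ y / X := (one_le_div hXpos).mpr hy
  set k := ⌈Real.logb 2 (y / X)⌉₊ with hkdef
  have hlogb0 : 0 ≤ Real.logb 2 (y / X) := Real.logb_nonneg (by norm_num) hyX1
  have hyk : y ≤ X * 2 ^ k := by
    have h1 : Real.logb 2 (y / X) ≤ (k : ℝ) := Nat.le_ceil _
    have h2' : y / X ≤ (2:ℝ) ^ (k:ℝ) := by
      calc y / X = (2:ℝ) ^ Real.logb 2 (y/X) :=
            (Real.rpow_logb (by norm_num) (by norm_num) (by positivity)).symm
        _ ≤ (2:ℝ) ^ (k:ℝ) := Real.rpow_le_rpow_of_exponent_le (by norm_num) h1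
      -- done
    rw [← Real.rpow_natCast]
    calc y = X * (y / X) := by field_simp
      _ ≤ X * (2:ℝ) ^ (k:ℝ) := by nlinarith
  have hk2 : ((2:ℝ) ^ k : ℝ) ≤ 2 * (y / X) := by
    have h1 : (k : ℝ) < Real.logb 2 (y / X) + 1 := Nat.ceil_lt_add_one hlogb0
    calc ((2:ℝ) ^ k : ℝ) = (2:ℝ) ^ (k:ℝ) := by rw [Real.rpow_natCast]
      _ ≤ (2:ℝ) ^ (Real.logb 2 (y/X) + 1) :=
          Real.rpow_le_rpow_of_exponent_le (by norm_num) h1.le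
      _ = (2:ℝ) ^ Real.logb 2 (y/X) * 2 := by
          rw [Real.rpow_add (by norm_num), Real.rpow_one]
      _ = 2 * (y / X) := by
          rw [Real.rpow_logb (by norm_num) (by norm_num) (by positivity)]; ring
  have hLy : L y ≤ M₀ * ((2:ℝ) ^ ε) ^ k := key k y hy hyk
  have hpow : ((2:ℝ) ^ ε) ^ k ≤ (2 * (y / X)) ^ ε := by
    rw [← Real.rpow_natCast ((2:ℝ)^ε) k, ← Real.rpow_mul (by norm_num), mul_comm ε (k:ℝ),
      Real.rpow_mul (by norm_num : (0:ℝ) ≤ 2), Real.rpow_natCast]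
    exact Real.rpow_le_rpow (by positivity) hk2 hε.le
  calc L y ≤ M₀ * ((2:ℝ) ^ ε) ^ k := hLy
    _ ≤ M₀ * (2 * (y / X)) ^ ε := by nlinarith
    _ = M₀ * (2 / X) ^ ε * y ^ ε := by
        rw [show 2 * (y / X) = (2 / X) * y by ring,
          Real.mul_rpow (by positivity) (by positivity)]
        ring


lemma geom_le_two {r : ℝ} (h0 : 0 ≤ r) (h : r ≤ 1/2) (K : ℕ) :
    ∑ i ∈ Finset.range K, r ^ i ≤ 2 := by
  have hr1 : r < 1 := by linarith
  calc ∑ i ∈ Finset.range K, r ^ i ≤ ∑' i : ℕ, r ^ i :=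
        Summable.sum_le_tsum _ (fun i _ => pow_nonneg h0 i) (summable_geometric_of_lt_one h0 hr1)
    _ = (1 - r)⁻¹ := tsum_geometric_of_lt_one h0 hr1
    _ ≤ 2 := by
        rw [show (2:ℝ) = ((1:ℝ)/2)⁻¹ by norm_num]
        exact inv_anti₀ (by norm_num) (by linarith)

lemma nu_sub_one_le (N p n : ℕ) (hp : p.Prime) (hn1 : 1 ≤ n) (hnN : n ≤ N) :
    n.factorization p - 1 ≤ ∑ α ∈ Finset.Icc 2 N, if p ^ α ∣ n then 1 else 0 := by
  set ν := n.factorization p with hν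
  rcases Nat.lt_or_ge ν 2 with hν2 | hν2
  · have h0 : ν - 1 = 0 := by omega
    rw [h0]; exact Nat.zero_le _
  · have hn0 : n ≠ 0 := by omega
    have hνN : ν ≤ N := by
      have h1 : p ^ ν ∣ n := Nat.ordProj_dvd n p
      have h2 : p ^ ν ≤ n := Nat.le_of_dvd (by omega) h1
      have h3 : ν < 2 ^ ν := Nat.lt_two_pow_self
      have h4 : 2 ^ ν ≤ p ^ ν := Nat.pow_le_pow_left hp.two_le ν
      omega
    calc ν - 1 = ∑ _α ∈ Finset.Icc 2 ν, 1 := by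
          rw [Finset.sum_const, smul_eq_mul, mul_one, Nat.card_Icc]; omega
      _ = ∑ α ∈ Finset.Icc 2 ν, (if p ^ α ∣ n then 1 else 0) := by
          refine Finset.sum_congr rfl (fun α hα => ?_)
          rw [Finset.mem_Icc] at hα
          rw [if_pos ((Nat.Prime.pow_dvd_iff_le_factorization hp hn0).mpr hα.2)]
      _ ≤ ∑ α ∈ Finset.Icc 2 N, (if p ^ α ∣ n then 1 else 0) :=
          Finset.sum_le_sum_of_subset (Finset.Icc_subset_Icc_right hνN)

lemma count_le (N p : ℕ) (hp : p.Prime) :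
    (∑ n ∈ Finset.Icc 1 N, ((n.factorization p - 1 : ℕ) : ℝ)) ≤
      2 * (N:ℝ) / (p:ℝ) ^ (2:ℕ) := by
  have hp0 : (0:ℝ) < (p:ℝ) := by exact_mod_cast hp.pos
  have hp2 : (2:ℝ) ≤ (p:ℝ) := by exact_mod_cast hp.two_le
  -- natural number bound
  have hnat : (∑ n ∈ Finset.Icc 1 N, (n.factorization p - 1)) ≤
      ∑ α ∈ Finset.Icc 2 N, N / p ^ α := by
    calc ∑ n ∈ Finset.Icc 1 N, (n.factorization p - 1)
        ≤ ∑ n ∈ Finset.Icc 1 N, ∑ α ∈ Finset.Icc 2 N, (if p ^ α ∣ n then 1 else 0) := by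
          refine Finset.sum_le_sum (fun n hn => ?_)
          rw [Finset.mem_Icc] at hn
          exact nu_sub_one_le N p n hp hn.1 hn.2
      _ = ∑ α ∈ Finset.Icc 2 N, ∑ n ∈ Finset.Icc 1 N, (if p ^ α ∣ n then 1 else 0) :=
          Finset.sum_comm
      _ = ∑ α ∈ Finset.Icc 2 N, N / p ^ α := by
          refine Finset.sum_congr rfl (fun α _ => ?_)
          rw [show Finset.Icc 1 N = Finset.Ioc 0 N from Finset.Icc_add_one_left_eq_Ioc 0 N,
            ← Finset.card_filter]
          exact Nat.Ioc_filter_dvd_card_eq_div N (p ^ α)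
  -- real bound
  have hreal : ((∑ α ∈ Finset.Icc 2 N, N / p ^ α : ℕ) : ℝ) ≤ 2 * (N:ℝ) / (p:ℝ) ^ (2:ℕ) := by
    push_cast
    set r : ℝ := ((p:ℝ))⁻¹ with hrdef
    have hr0 : 0 ≤ r := by positivity
    have hr2 : r ≤ 1/2 := by
      rw [hrdef]
      rw [inv_le_comm₀ hp0 (by norm_num)]
      linarith
    calc ∑ α ∈ Finset.Icc 2 N, ((N / p ^ α : ℕ) : ℝ)
        ≤ ∑ α ∈ Finset.Icc 2 N, (N:ℝ) * r ^ α := by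
          refine Finset.sum_le_sum (fun α _ => ?_)
          calc ((N / p ^ α : ℕ) : ℝ) ≤ (N:ℝ) / ((p:ℝ) ^ α) := by
                have := Nat.cast_div_le (α := ℝ) (m := N) (n := p ^ α)
                push_cast at this
                exact this
            _ = (N:ℝ) * r ^ α := by
                rw [hrdef, division_def, inv_pow]
      _ = (N:ℝ) * ∑ α ∈ Finset.Icc 2 N, r ^ α := by rw [Finset.mul_sum]
      _ ≤ (N:ℝ) * (r ^ (2:ℕ) * 2) := by
          refine mul_le_mul_of_nonneg_left ?_ (Nat.cast_nonneg N)
          have : Finset.Icc 2 N = Finset.Ico 2 (N+1) := by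
            rw [Finset.Ico_add_one_right_eq_Icc]
          rw [this, Finset.sum_Ico_eq_sum_range]
          calc ∑ i ∈ Finset.range (N + 1 - 2), r ^ (2 + i)
              = r ^ (2:ℕ) * ∑ i ∈ Finset.range (N + 1 - 2), r ^ i := by
                rw [Finset.mul_sum]
                refine Finset.sum_congr rfl (fun i _ => ?_)
                rw [pow_add]
            _ ≤ r ^ (2:ℕ) * 2 :=
                mul_le_mul_of_nonneg_left (geom_le_two hr0 hr2 _) (by positivity)
      _ = 2 * (N:ℝ) * r ^ (2:ℕ) := by ring
      _ = 2 * (N:ℝ) / (p:ℝ) ^ (2:ℕ) := by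
          rw [hrdef, inv_pow, division_def]
  calc (∑ n ∈ Finset.Icc 1 N, ((n.factorization p - 1 : ℕ) : ℝ))
      = ((∑ n ∈ Finset.Icc 1 N, (n.factorization p - 1) : ℕ) : ℝ) := by push_cast; rfl
    _ ≤ ((∑ α ∈ Finset.Icc 2 N, N / p ^ α : ℕ) : ℝ) := by exact_mod_cast hnat
    _ ≤ 2 * (N:ℝ) / (p:ℝ) ^ (2:ℕ) := hreal

lemma count_zero (N p : ℕ) (hp : p.Prime) (hN : N < p * p) {n : ℕ}
    (hn1 : 1 ≤ n) (hnN : n ≤ N) : n.factorization p - 1 = 0 := by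
  by_contra hcon
  have h2 : 2 ≤ n.factorization p := by omega
  have hdvd : p ^ 2 ∣ n := (Nat.Prime.pow_dvd_iff_le_factorization hp (by omega)).mpr h2
  have := Nat.le_of_dvd (by omega) hdvd
  have : p ^ 2 ≤ N := le_trans this hnN
  nlinarith [this, sq p]

/-- For `L` slowly varying, `ρ ∈ ℝ`, `h(p) = p^ρ L(p)`,
`f(n) = ∑_{p|n} h(p)` and `F(n) = ∑_{p^α||n} α·h(p)`, one has, for every `ε > 0`,
`∑_{n≤x} (F(n) − f(n)) = O_ε(max(x, x^{(ρ+1)/2+ε}))` as `x → ∞`. -/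
theorem statement5
    (x₀ : ℝ) (hx₀ : 0 < x₀) (L : ℝ → ℝ)
    (hLpos : ∀ x, x₀ ≤ x → 0 < L x)
    (hLcont : ContinuousOn L (Set.Ici x₀))
    (hLslow : ∀ c : ℝ, 0 < c →
      Tendsto (fun x : ℝ => L (c * x) / L x) atTop (nhds 1))
    (ρ : ℝ) (ε : ℝ) (hε : 0 < ε) :
    (fun x : ℝ => ∑ n ∈ Finset.Icc 1 ⌊x⌋₊,
        ((∑ p ∈ n.primeFactors, (n.factorization p : ℝ) * ((p : ℝ) ^ ρ * L p)) -
          ∑ p ∈ n.primeFactors, (p : ℝ) ^ ρ * L p)) =O[atTop]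
      (fun x : ℝ => max x (x ^ ((ρ + 1) / 2 + ε))) := by
  obtain ⟨Cp, hCp, X, hXx₀, hPotter⟩ := potter x₀ hx₀ L hLpos hLcont hLslow ε hε
  set h : ℕ → ℝ := fun p => (p:ℝ) ^ ρ * L p with hhdef
  have hXpos : 0 < X := lt_of_lt_of_le hx₀ hXx₀
  -- global bound on |h p| for primes
  obtain ⟨C, hC0, hCh⟩ : ∃ C, 0 < C ∧ ∀ p : ℕ, p.Prime → |h p| ≤ C * (p:ℝ) ^ (ρ + ε) := by
    set Q := (⌈X⌉₊ + 1).primesBelow with hQdef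
    set B := ∑ p ∈ Q, |h p| / (p:ℝ) ^ (ρ + ε) with hBdef
    have hB0 : 0 ≤ B := Finset.sum_nonneg (fun p _ => by positivity)
    refine ⟨Cp + B, by linarith, fun p hp => ?_⟩
    have hp0 : (0:ℝ) < (p:ℝ) := by exact_mod_cast hp.pos
    have hppow : (0:ℝ) < (p:ℝ) ^ (ρ + ε) := Real.rpow_pos_of_pos hp0 _
    rcases le_or_gt X (p:ℝ) with hc | hc
    · have hLp : L p ≤ Cp * (p:ℝ) ^ ε := hPotter p hc
      have hLppos : 0 < L p := hLpos p (le_trans hXx₀ hc)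
      have : |h p| = (p:ℝ) ^ ρ * L p := by
        rw [hhdef]; exact abs_of_pos (by positivity)
      rw [this, Real.rpow_add hp0]
      calc (p:ℝ) ^ ρ * L p ≤ (p:ℝ) ^ ρ * (Cp * (p:ℝ) ^ ε) := by
            exact mul_le_mul_of_nonneg_left hLp (by positivity)
        _ = Cp * ((p:ℝ) ^ ρ * (p:ℝ) ^ ε) := by ring
        _ ≤ (Cp + B) * ((p:ℝ) ^ ρ * (p:ℝ) ^ ε) := by
            have : (0:ℝ) < (p:ℝ) ^ ρ * (p:ℝ) ^ ε := by positivity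
            nlinarith
    · have hpQ : p ∈ Q := by
        rw [hQdef, Nat.mem_primesBelow]
        refine ⟨?_, hp⟩
        have : (p:ℝ) ≤ (⌈X⌉₊ : ℝ) := le_trans hc.le (Nat.le_ceil X)
        exact_mod_cast lt_of_le_of_lt (by exact_mod_cast this : p ≤ ⌈X⌉₊) (Nat.lt_succ_self _)
      have hsingle : |h p| / (p:ℝ) ^ (ρ + ε) ≤ B :=
        Finset.single_le_sum (f := fun q => |h q| / (q:ℝ) ^ (ρ + ε))
          (fun q _ => by positivity) hpQ
      rw [div_le_iff₀ hppow] at hsingle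
      calc |h p| ≤ B * (p:ℝ) ^ (ρ + ε) := hsingle
        _ ≤ (Cp + B) * (p:ℝ) ^ (ρ + ε) := by nlinarith
  set Z := ∑' m : ℕ, (m:ℝ) ^ (-1 - ε) with hZdef
  have hZsum : Summable (fun m : ℕ => (m:ℝ) ^ (-1 - ε)) :=
    Real.summable_nat_rpow.mpr (by linarith)
  have hZ0 : 0 ≤ Z := tsum_nonneg (fun m => Real.rpow_nonneg (Nat.cast_nonneg m) _)
  rw [Asymptotics.isBigO_iff]
  refine ⟨2 * C * Z, ?_⟩
  filter_upwards [eventually_ge_atTop (1:ℝ)] with x hx1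
  have hx0 : (0:ℝ) < x := by linarith
  set N := ⌊x⌋₊ with hNdef
  have hNx : (N:ℝ) ≤ x := Nat.floor_le hx0.le
  set P := (N+1).primesBelow with hPdef
  set M := N.sqrt with hMdef
  set K : ℕ → ℝ := fun p => ∑ n ∈ Finset.Icc 1 N, ((n.factorization p - 1 : ℕ) : ℝ) with hKdef
  have hK0 : ∀ p, 0 ≤ K p := fun p => Finset.sum_nonneg (fun n _ => Nat.cast_nonneg _)
  -- Step 1
  have step1 : |∑ n ∈ Finset.Icc 1 N,
        ((∑ p ∈ n.primeFactors, (n.factorization p : ℝ) * h p) -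
          ∑ p ∈ n.primeFactors, h p)| ≤ ∑ p ∈ P, |h p| * K p := by
    calc |∑ n ∈ Finset.Icc 1 N,
          ((∑ p ∈ n.primeFactors, (n.factorization p : ℝ) * h p) -
            ∑ p ∈ n.primeFactors, h p)|
        ≤ ∑ n ∈ Finset.Icc 1 N,
            |(∑ p ∈ n.primeFactors, (n.factorization p : ℝ) * h p) -
              ∑ p ∈ n.primeFactors, h p| := Finset.abs_sum_le_sum_abs _ _
      _ ≤ ∑ n ∈ Finset.Icc 1 N, ∑ p ∈ P, ((n.factorization p - 1 : ℕ) : ℝ) * |h p| := by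
          refine Finset.sum_le_sum (fun n hn => ?_)
          rw [Finset.mem_Icc] at hn
          have hn0 : n ≠ 0 := by omega
          rw [← Finset.sum_sub_distrib]
          calc |∑ p ∈ n.primeFactors, ((n.factorization p : ℝ) * h p - h p)|
              ≤ ∑ p ∈ n.primeFactors, |(n.factorization p : ℝ) * h p - h p| :=
                Finset.abs_sum_le_sum_abs _ _
            _ = ∑ p ∈ n.primeFactors, ((n.factorization p - 1 : ℕ) : ℝ) * |h p| := by
                refine Finset.sum_congr rfl (fun p hp => ?_)
                have hp' := Nat.prime_of_mem_primeFactors hp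
                have hν1 : 1 ≤ n.factorization p :=
                  (Nat.Prime.factorization_pos_of_dvd hp' hn0
                    (Nat.dvd_of_mem_primeFactors hp))
                rw [show (n.factorization p : ℝ) * h p - h p =
                    ((n.factorization p : ℝ) - 1) * h p by ring, abs_mul,
                  Nat.cast_sub hν1]
                push_cast
                rw [abs_of_nonneg (by
                  have : (1:ℝ) ≤ (n.factorization p : ℝ) := by exact_mod_cast hν1
                  linarith)]
            _ ≤ ∑ p ∈ P, ((n.factorization p - 1 : ℕ) : ℝ) * |h p| := by
                refine Finset.sum_le_sum_of_subset_of_nonneg ?_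
                  (fun p _ _ => by positivity)
                intro p hp
                rw [hPdef, Nat.mem_primesBelow]
                have hdvd := Nat.dvd_of_mem_primeFactors hp
                have : p ≤ n := Nat.le_of_dvd (by omega) hdvd
                exact ⟨by omega, Nat.prime_of_mem_primeFactors hp⟩
      _ = ∑ p ∈ P, |h p| * K p := by
          rw [Finset.sum_comm]
          refine Finset.sum_congr rfl (fun p _ => ?_)
          rw [hKdef, Finset.mul_sum]
          refine Finset.sum_congr rfl (fun n _ => by ring)
  -- Step 2: restrict to p * p ≤ N
  have step2 : ∑ p ∈ P, |h p| * K p = ∑ p ∈ P.filter (fun p => p * p ≤ N), |h p| * K p := by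
    rw [← Finset.sum_filter_add_sum_filter_not P (fun p => p * p ≤ N)]
    have hzero : ∑ p ∈ P.filter (fun p => ¬ p * p ≤ N), |h p| * K p = 0 := by
      refine Finset.sum_eq_zero (fun p hp => ?_)
      rw [Finset.mem_filter] at hp
      have hp' := Nat.prime_of_mem_primesBelow hp.1
      have : K p = 0 := by
        rw [hKdef]
        refine Finset.sum_eq_zero (fun n hn => ?_)
        rw [Finset.mem_Icc] at hn
        rw [count_zero N p hp' (by omega) hn.1 hn.2]
        norm_num
      rw [this, mul_zero]
    rw [hzero, add_zero]
  -- Step 3: bound each term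
  have step3 : ∑ p ∈ P.filter (fun p => p * p ≤ N), |h p| * K p ≤
      ∑ m ∈ Finset.Icc 1 M, 2 * C * (N:ℝ) * (m:ℝ) ^ (ρ + ε - 2) := by
    calc ∑ p ∈ P.filter (fun p => p * p ≤ N), |h p| * K p
        ≤ ∑ p ∈ P.filter (fun p => p * p ≤ N), 2 * C * (N:ℝ) * (p:ℝ) ^ (ρ + ε - 2) := by
          refine Finset.sum_le_sum (fun p hp => ?_)
          rw [Finset.mem_filter] at hp
          have hp' := Nat.prime_of_mem_primesBelow hp.1
          have hp0 : (0:ℝ) < (p:ℝ) := by exact_mod_cast hp'.pos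
          have h1 : |h p| * K p ≤ |h p| * (2 * (N:ℝ) / (p:ℝ) ^ (2:ℕ)) :=
            mul_le_mul_of_nonneg_left (count_le N p hp') (abs_nonneg _)
          have h2 : |h p| * (2 * (N:ℝ) / (p:ℝ) ^ (2:ℕ)) ≤
              (C * (p:ℝ) ^ (ρ + ε)) * (2 * (N:ℝ) / (p:ℝ) ^ (2:ℕ)) :=
            mul_le_mul_of_nonneg_right (hCh p hp') (by positivity)
          refine le_trans h1 (le_trans h2 (le_of_eq ?_))
          rw [show (ρ + ε - 2) = (ρ + ε) - ((2:ℕ):ℝ) by norm_num,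
            Real.rpow_sub hp0, Real.rpow_natCast]
          ring
      _ ≤ ∑ m ∈ Finset.Icc 1 M, 2 * C * (N:ℝ) * (m:ℝ) ^ (ρ + ε - 2) := by
          refine Finset.sum_le_sum_of_subset_of_nonneg ?_ (fun m _ _ => by positivity)
          intro p hp
          rw [Finset.mem_filter] at hp
          have hp' := Nat.prime_of_mem_primesBelow hp.1
          rw [Finset.mem_Icc]
          exact ⟨hp'.one_lt.le, Nat.le_sqrt.mpr hp.2⟩
  -- Step 4: case analysis
  have hmax0 : (0:ℝ) < max x (x ^ ((ρ + 1) / 2 + ε)) := lt_of_lt_of_le hx0 (le_max_left _ _)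
  rw [Real.norm_eq_abs, Real.norm_eq_abs, abs_of_pos hmax0]
  have hsummand : ∀ m ∈ Finset.Icc 1 M, (1:ℝ) ≤ (m:ℝ) := by
    intro m hm
    rw [Finset.mem_Icc] at hm
    exact_mod_cast hm.1
  have hZbound : ∑ m ∈ Finset.Icc 1 M, (m:ℝ) ^ (-1 - ε) ≤ Z :=
    Summable.sum_le_tsum _ (fun m _ => Real.rpow_nonneg (Nat.cast_nonneg m) _) hZsum
  rcases le_or_gt (ρ + 2 * ε) 1 with hcase | hcase
  · -- Case A
    have hA : ∑ m ∈ Finset.Icc 1 M, 2 * C * (N:ℝ) * (m:ℝ) ^ (ρ + ε - 2) ≤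
        2 * C * (N:ℝ) * Z := by
      rw [← Finset.mul_sum]
      refine mul_le_mul_of_nonneg_left ?_ (by positivity)
      refine le_trans (Finset.sum_le_sum (fun m hm => ?_)) hZbound
      exact Real.rpow_le_rpow_of_exponent_le (hsummand m hm) (by linarith)
    calc |∑ n ∈ Finset.Icc 1 N, _| ≤ ∑ p ∈ P, |h p| * K p := step1
      _ = _ := step2
      _ ≤ ∑ m ∈ Finset.Icc 1 M, 2 * C * (N:ℝ) * (m:ℝ) ^ (ρ + ε - 2) := step3
      _ ≤ 2 * C * (N:ℝ) * Z := hA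
      _ = 2 * C * Z * (N:ℝ) := by ring
      _ ≤ 2 * C * Z * x := mul_le_mul_of_nonneg_left hNx (by positivity)
      _ ≤ 2 * C * Z * max x (x ^ ((ρ + 1) / 2 + ε)) := by
          refine mul_le_mul_of_nonneg_left (le_max_left _ _) (by positivity)
  · -- Case B
    have hMx : (M:ℝ) ≤ x ^ ((1:ℝ)/2) := by
      have hM2 : (M:ℝ) * (M:ℝ) ≤ x := by
        calc (M:ℝ) * (M:ℝ) = ((M * M : ℕ) : ℝ) := by push_cast; ring
          _ ≤ (N:ℝ) := by exact_mod_cast Nat.sqrt_le N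
          _ ≤ x := hNx
      calc (M:ℝ) = ((M:ℝ) ^ (2:ℝ)) ^ ((1:ℝ)/2) := by
            rw [← Real.rpow_mul (Nat.cast_nonneg M)]
            norm_num
        _ ≤ x ^ ((1:ℝ)/2) := by
            refine Real.rpow_le_rpow (by positivity) ?_ (by norm_num)
            rw [show (2:ℝ) = ((2:ℕ):ℝ) by norm_num, Real.rpow_natCast]
            nlinarith
    have hexp0 : (0:ℝ) ≤ ρ + 2 * ε - 1 := by linarith
    have hB : ∑ m ∈ Finset.Icc 1 M, 2 * C * (N:ℝ) * (m:ℝ) ^ (ρ + ε - 2) ≤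
        2 * C * (N:ℝ) * (Z * (x ^ ((1:ℝ)/2)) ^ (ρ + 2 * ε - 1)) := by
      rw [← Finset.mul_sum]
      refine mul_le_mul_of_nonneg_left ?_ (by positivity)
      calc ∑ m ∈ Finset.Icc 1 M, (m:ℝ) ^ (ρ + ε - 2)
          ≤ ∑ m ∈ Finset.Icc 1 M, (m:ℝ) ^ (-1 - ε) * (x ^ ((1:ℝ)/2)) ^ (ρ + 2 * ε - 1) := by
            refine Finset.sum_le_sum (fun m hm => ?_)
            have hm1 : (1:ℝ) ≤ (m:ℝ) := hsummand m hm
            have hm0 : (0:ℝ) < (m:ℝ) := by linarith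
            have hmM : (m:ℝ) ≤ (M:ℝ) := by
              rw [Finset.mem_Icc] at hm
              exact_mod_cast hm.2
            calc (m:ℝ) ^ (ρ + ε - 2) = (m:ℝ) ^ (-1 - ε) * (m:ℝ) ^ (ρ + 2 * ε - 1) := by
                  rw [← Real.rpow_add hm0]; ring_nf
              _ ≤ (m:ℝ) ^ (-1 - ε) * (x ^ ((1:ℝ)/2)) ^ (ρ + 2 * ε - 1) := by
                  refine mul_le_mul_of_nonneg_left ?_ (by positivity)
                  exact Real.rpow_le_rpow hm0.le (le_trans hmM hMx) hexp0
        _ = (∑ m ∈ Finset.Icc 1 M, (m:ℝ) ^ (-1 - ε)) * (x ^ ((1:ℝ)/2)) ^ (ρ + 2 * ε - 1) :=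
            (Finset.sum_mul _ _ _).symm
        _ ≤ Z * (x ^ ((1:ℝ)/2)) ^ (ρ + 2 * ε - 1) :=
            mul_le_mul_of_nonneg_right hZbound (by positivity)
    have hfinal : 2 * C * (N:ℝ) * (Z * (x ^ ((1:ℝ)/2)) ^ (ρ + 2 * ε - 1)) ≤
        2 * C * Z * max x (x ^ ((ρ + 1) / 2 + ε)) := by
      have hx' : x ^ ((1:ℝ)/2 * (ρ + 2 * ε - 1)) = (x ^ ((1:ℝ)/2)) ^ (ρ + 2 * ε - 1) :=
        Real.rpow_mul hx0.le _ _
      have hkey : x * (x ^ ((1:ℝ)/2)) ^ (ρ + 2 * ε - 1) = x ^ ((ρ + 1) / 2 + ε) := by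
        rw [← hx', ← Real.rpow_one_add' hx0.le (by intro hcon; linarith : (1:ℝ) + 1/2 * (ρ + 2*ε - 1) ≠ 0)]
        congr 1
        ring
      calc 2 * C * (N:ℝ) * (Z * (x ^ ((1:ℝ)/2)) ^ (ρ + 2 * ε - 1))
          = 2 * C * Z * ((x ^ ((1:ℝ)/2)) ^ (ρ + 2 * ε - 1)) * (N:ℝ) := by ring
        _ ≤ 2 * C * Z * ((x ^ ((1:ℝ)/2)) ^ (ρ + 2 * ε - 1)) * x :=
            mul_le_mul_of_nonneg_left hNx (by positivity)
        _ = 2 * C * Z * (x * (x ^ ((1:ℝ)/2)) ^ (ρ + 2 * ε - 1)) := by ring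
        _ = 2 * C * Z * x ^ ((ρ + 1) / 2 + ε) := by rw [hkey]
        _ ≤ 2 * C * Z * max x (x ^ ((ρ + 1) / 2 + ε)) :=
            mul_le_mul_of_nonneg_left (le_max_right _ _) (by positivity)
    calc |∑ n ∈ Finset.Icc 1 N, _| ≤ ∑ p ∈ P, |h p| * K p := step1
      _ = _ := step2
      _ ≤ ∑ m ∈ Finset.Icc 1 M, 2 * C * (N:ℝ) * (m:ℝ) ^ (ρ + ε - 2) := step3
      _ ≤ 2 * C * (N:ℝ) * (Z * (x ^ ((1:ℝ)/2)) ^ (ρ + 2 * ε - 1)) := hB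
      _ ≤ 2 * C * Z * max x (x ^ ((ρ + 1) / 2 + ε)) := hfinal
end

section
/- Let α < 0. Then the series c_α := Σ_p (log p)^α/p over all primes p converges, and as x → ∞, Σ_{n≤x} Σ_{p|n} (log p)^α = c_α·x + O( x·(log x)^α ), where the inner sum is over the distinct prime divisors p of n. -/
open Filter Finset

noncomputable def Gfun (α : ℝ) (n : ℕ) : ℝ := if n.Prime then Real.log n ^ α / n else 0

lemma Gfun_nonneg (α : ℝ) (n : ℕ) : 0 ≤ Gfun α n := by
  unfold Gfun
  split
  · next h =>
    apply div_nonneg _ (Nat.cast_nonneg n)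
    apply Real.rpow_nonneg
    exact Real.log_nonneg (by exact_mod_cast h.one_lt.le)
  · exact le_refl 0

-- Chebyshev from primorial
lemma theta_le (N : ℕ) : ∑ p ∈ (range (N+1)).filter Nat.Prime, Real.log p ≤ N * Real.log 4 := by
  have h1 : Real.log (primorial N) ≤ Real.log (4 ^ N) := by
    apply Real.log_le_log (by exact_mod_cast primorial_pos N)
    exact_mod_cast primorial_le_4_pow N
  rw [Real.log_pow] at h1
  unfold primorial at h1
  rw [Nat.cast_prod, Real.log_prod] at h1
  · exact h1
  · intro x hx
    simp only [mem_filter] at hx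
    have := hx.2.two_le
    positivity

lemma keyineq (α : ℝ) (hα : α < 0) (k : ℕ) (hk : 1 ≤ k) :
    (k:ℝ) ^ (α-1) ≤ ((2:ℝ) ^ (1-α) / (-α)) * ((k:ℝ)^α - ((k:ℝ)+1)^α) := by
  have hk1 : (1:ℝ) ≤ (k:ℝ) := by exact_mod_cast hk
  have hk0 : (0:ℝ) < k := by linarith
  have hlt : (k:ℝ) < (k:ℝ) + 1 := by linarith
  have hna : (0:ℝ) < -α := by linarith
  obtain ⟨c, hc, hceq⟩ := exists_hasDerivAt_eq_slope (fun t => t ^ α)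
      (fun t => α * t ^ (α-1)) hlt
      (fun x hx => by
        have hx0 : x ≠ 0 := by
          intro h; rw [h] at hx; exact absurd hx.1 (by linarith)
        exact (Real.hasDerivAt_rpow_const (Or.inl hx0)).continuousAt.continuousWithinAt)
      (fun x hx => by
        have hx0 : x ≠ 0 := by
          intro h; rw [h] at hx; exact absurd hx.1 (by linarith)
        exact Real.hasDerivAt_rpow_const (Or.inl hx0))
  have hc0 : (0:ℝ) < c := lt_trans hk0 hc.1
  have hceq' : (k:ℝ)^α - ((k:ℝ)+1)^α = (-α) * c ^ (α-1) := by
    have h3 : ((k:ℝ)+1) ^ α - (k:ℝ) ^ α = α * c ^ (α-1) := by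
      rw [hceq]; simp
    linarith
  have h1 : ((2:ℝ)*k) ^ (α-1) ≤ c ^ (α-1) := by
    apply Real.rpow_le_rpow_of_nonpos hc0 _ (by linarith)
    have := hc.2
    linarith
  have h2 : ((2:ℝ)*k) ^ (α-1) = (2:ℝ)^(α-1) * (k:ℝ)^(α-1) := by
    exact Real.mul_rpow (by norm_num) hk0.le
  have h2α : (2:ℝ)^(1-α) * (2:ℝ)^(α-1) = 1 := by
    rw [← Real.rpow_add (by norm_num : (0:ℝ)<2)]
    norm_num
  have hconst : ((2:ℝ)^(1-α)/(-α)) * ((-α) * (2:ℝ)^(α-1)) = 1 := by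
    calc ((2:ℝ)^(1-α)/(-α)) * ((-α) * (2:ℝ)^(α-1))
        = ((2:ℝ)^(1-α) * (2:ℝ)^(α-1)) * ((-α)/(-α)) := by ring
      _ = 1 := by rw [h2α, div_self (ne_of_gt hna), one_mul]
  have hmain : (-α) * ((2:ℝ)^(α-1)) * (k:ℝ)^(α-1) ≤ (k:ℝ)^α - ((k:ℝ)+1)^α := by
    rw [hceq']
    calc (-α) * ((2:ℝ)^(α-1)) * (k:ℝ)^(α-1) = (-α) * (((2:ℝ)*k)^(α-1)) := by
          rw [h2]; ring
      _ ≤ (-α) * c ^ (α-1) := mul_le_mul_of_nonneg_left h1 hna.le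
  calc (k:ℝ) ^ (α-1)
      = ((2:ℝ) ^ (1-α) / (-α)) * ((-α) * ((2:ℝ)^(α-1)) * (k:ℝ)^(α-1)) := by
        rw [show ((2:ℝ) ^ (1-α) / (-α)) * ((-α) * ((2:ℝ)^(α-1)) * (k:ℝ)^(α-1))
            = (((2:ℝ)^(1-α)/(-α)) * ((-α) * (2:ℝ)^(α-1))) * (k:ℝ)^(α-1) from by ring,
          hconst, one_mul]
    _ ≤ _ := mul_le_mul_of_nonneg_left hmain (by positivity)

lemma telescope (α : ℝ) (hα : α < 0) (K M : ℕ) (hK : 1 ≤ K) :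
    ∑ k ∈ Icc K M, (k:ℝ)^(α-1) ≤ ((2:ℝ)^(1-α)/(-α)) * (K:ℝ)^α := by
  have hK0 : (0:ℝ) < K := by exact_mod_cast hK
  have hCpos : (0:ℝ) < (2:ℝ)^(1-α)/(-α) :=
    div_pos (Real.rpow_pos_of_pos (by norm_num) _) (by linarith)
  rcases lt_or_ge M K with h | h
  · rw [Finset.Icc_eq_empty (by omega)]
    simp only [sum_empty]
    exact mul_nonneg hCpos.le (Real.rpow_nonneg hK0.le _)
  · calc ∑ k ∈ Icc K M, (k:ℝ)^(α-1)
        ≤ ∑ k ∈ Icc K M, ((2:ℝ)^(1-α)/(-α)) * ((k:ℝ)^α - ((k:ℝ)+1)^α) := by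
          apply Finset.sum_le_sum
          intro k hk
          exact keyineq α hα k (le_trans hK (mem_Icc.mp hk).1)
      _ = ((2:ℝ)^(1-α)/(-α)) * ∑ k ∈ Icc K M, ((k:ℝ)^α - ((k:ℝ)+1)^α) := by
          rw [mul_sum]
      _ ≤ ((2:ℝ)^(1-α)/(-α)) * (K:ℝ)^α := by
          apply mul_le_mul_of_nonneg_left _ hCpos.le
          have htail : (0:ℝ) ≤ ((K+(M+1-K):ℕ):ℝ)^α := Real.rpow_nonneg (Nat.cast_nonneg _) _
          calc ∑ k ∈ Icc K M, ((k:ℝ)^α - ((k:ℝ)+1)^α)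
              = ∑ i ∈ range (M+1-K), (((K+i:ℕ):ℝ)^α - ((K+(i+1):ℕ):ℝ)^α) := by
                rw [← Finset.Ico_add_one_right_eq_Icc, Finset.sum_Ico_eq_sum_range]
                apply Finset.sum_congr rfl
                intro i _
                push_cast
                ring_nf
            _ = ((K+0:ℕ):ℝ)^α - ((K+(M+1-K):ℕ):ℝ)^α :=
                Finset.sum_range_sub' (fun i => ((K+i:ℕ):ℝ)^α) _
            _ ≤ (K:ℝ)^α := by
                simp only [Nat.add_zero]
                linarith

lemma block_le (α : ℝ) (hα : α < 0) (k : ℕ) (hk : 1 ≤ k) :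
    ∑ n ∈ Ioc (2^k) (2^(k+1)), Gfun α n
      ≤ (4 * Real.log 2 ^ α) * (k:ℝ)^(α-1) := by
  have hk1 : (1:ℝ) ≤ (k:ℝ) := by exact_mod_cast hk
  have hk0 : (0:ℝ) < k := by linarith
  have hL2 : (0:ℝ) < Real.log 2 := Real.log_pos (by norm_num)
  set P := (Ioc (2^k) (2^(k+1))).filter Nat.Prime with hP
  have hsum_eq : ∑ n ∈ Ioc (2^k) (2^(k+1)), Gfun α n = ∑ p ∈ P, Gfun α p := by
    rw [hP]
    symm
    apply Finset.sum_filter_of_ne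
    intro x _ hx
    unfold Gfun at hx
    by_contra h
    simp [h] at hx
  -- lower bound on log p for p in P
  have hlogp : ∀ p ∈ P, (k:ℝ) * Real.log 2 ≤ Real.log p := by
    intro p hp
    simp only [hP, mem_filter, mem_Ioc] at hp
    have h2k : ((2:ℝ))^k ≤ (p:ℝ) := by exact_mod_cast le_of_lt hp.1.1
    calc (k:ℝ) * Real.log 2 = Real.log ((2:ℝ)^k) := by rw [Real.log_pow]
      _ ≤ Real.log p := Real.log_le_log (by positivity) h2k
  -- each term bound
  have hterm : ∀ p ∈ P, Gfun α p ≤ ((k:ℝ) * Real.log 2)^α / (2:ℝ)^k := by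
    intro p hp
    have hp' := hp
    simp only [hP, mem_filter, mem_Ioc] at hp'
    have hprime := hp'.2
    have h2k : ((2:ℝ))^k ≤ (p:ℝ) := by exact_mod_cast le_of_lt hp'.1.1
    unfold Gfun
    rw [if_pos hprime]
    apply div_le_div₀ (Real.rpow_nonneg (by positivity) _) _ (by positivity) h2k
    exact Real.rpow_le_rpow_of_nonpos (by positivity) (hlogp p hp) hα.le
  -- card bound
  have hcard : (P.card : ℝ) * ((k:ℝ) * Real.log 2) ≤ (2:ℝ)^(k+1) * Real.log 4 := by
    calc (P.card : ℝ) * ((k:ℝ) * Real.log 2) ≤ ∑ p ∈ P, Real.log p := by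
          have := Finset.card_nsmul_le_sum P (fun p => Real.log p) ((k:ℝ) * Real.log 2) hlogp
          simpa [nsmul_eq_mul] using this
      _ ≤ ∑ p ∈ (range (2^(k+1)+1)).filter Nat.Prime, Real.log p := by
          apply Finset.sum_le_sum_of_subset_of_nonneg
          · intro p hp
            simp only [hP, mem_filter, mem_Ioc, mem_range] at hp ⊢
            exact ⟨by omega, hp.2⟩
          · intro p hp _
            simp only [mem_filter] at hp
            have := hp.2.two_le
            exact Real.log_nonneg (by exact_mod_cast Nat.one_le_iff_ne_zero.mpr (by omega))
      _ ≤ (2^(k+1) : ℕ) * Real.log 4 := theta_le (2^(k+1))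
      _ = (2:ℝ)^(k+1) * Real.log 4 := by push_cast; ring
  have hcard' : (P.card : ℝ) ≤ (2:ℝ)^(k+1) * Real.log 4 / ((k:ℝ) * Real.log 2) := by
    rw [le_div_iff₀ (by positivity)]
    exact hcard
  have hlog4 : Real.log 4 = 2 * Real.log 2 := by
    rw [show (4:ℝ) = 2^2 by norm_num, Real.log_pow]
    push_cast; ring
  -- combine
  have hbound_nonneg : (0:ℝ) ≤ ((k:ℝ) * Real.log 2)^α / (2:ℝ)^k :=
    div_nonneg (Real.rpow_nonneg (by positivity) _) (by positivity)
  calc ∑ n ∈ Ioc (2^k) (2^(k+1)), Gfun α n = ∑ p ∈ P, Gfun α p := hsum_eq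
    _ ≤ P.card • (((k:ℝ) * Real.log 2)^α / (2:ℝ)^k) := Finset.sum_le_card_nsmul P _ _ hterm
    _ = (P.card : ℝ) * (((k:ℝ) * Real.log 2)^α / (2:ℝ)^k) := by rw [nsmul_eq_mul]
    _ ≤ ((2:ℝ)^(k+1) * Real.log 4 / ((k:ℝ) * Real.log 2)) * (((k:ℝ) * Real.log 2)^α / (2:ℝ)^k) :=
        mul_le_mul_of_nonneg_right hcard' hbound_nonneg
    _ = (4 * Real.log 2 ^ α) * (k:ℝ)^(α-1) := by
        rw [hlog4, Real.mul_rpow hk0.le hL2.le,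
          show (k:ℝ)^(α-1) = (k:ℝ)^α / (k:ℝ) by
            rw [Real.rpow_sub hk0, Real.rpow_one]]
        field_simp
        ring

lemma nonneg_const (α : ℝ) : (0:ℝ) ≤ 4 * Real.log 2 ^ α :=
  mul_nonneg (by norm_num) (Real.rpow_nonneg (Real.log_nonneg (by norm_num)) _)

lemma interval_le (α : ℝ) (hα : α < 0) (K : ℕ) (hK : 1 ≤ K) (M : ℕ) :
    ∑ n ∈ Ioc (2^K) (2^(M+1)), Gfun α n
      ≤ ∑ k ∈ Icc K M, (4 * Real.log 2 ^ α) * (k:ℝ)^(α-1) := by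
  induction M with
  | zero =>
      rw [Finset.Ioc_eq_empty, Finset.Icc_eq_empty]
      · simp
      · omega
      · push_neg
        exact Nat.pow_le_pow_right (by norm_num) hK
  | succ M ih =>
      rcases le_or_gt K (M+1) with h | h
      · have h1 : (2:ℕ)^K ≤ 2^(M+1) := Nat.pow_le_pow_right (by norm_num) h
        have h2 : (2:ℕ)^(M+1) ≤ 2^(M+2) := Nat.pow_le_pow_right (by norm_num) (by omega)
        rw [← Finset.Ioc_union_Ioc_eq_Ioc h1 h2,
          Finset.sum_union (by
            rw [Finset.disjoint_left]
            intro a ha hb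
            rw [mem_Ioc] at ha hb
            omega),
          Finset.sum_Icc_succ_top h]
        exact add_le_add ih (block_le α hα (M+1) (by omega))
      · rw [Finset.Ioc_eq_empty, Finset.Icc_eq_empty]
        · simp
        · omega
        · push_neg
          exact Nat.pow_le_pow_right (by norm_num) (by omega)

lemma finsetsum_le (α : ℝ) (hα : α < 0) (K : ℕ) (hK : 1 ≤ K) (u : Finset ℕ)
    (hu : ∀ n ∈ u, 2^K < n) :
    ∑ n ∈ u, Gfun α n
      ≤ (4 * Real.log 2 ^ α) * ((2:ℝ)^(1-α)/(-α)) * (K:ℝ)^α := by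
  set M := max (u.sup id) K with hM
  have hsub : u ⊆ Ioc (2^K) (2^(M+1)) := by
    intro n hn
    rw [mem_Ioc]
    refine ⟨hu n hn, ?_⟩
    have h1 : n ≤ M := le_trans (Finset.le_sup (f := id) hn) (le_max_left _ _)
    have h2 : M < 2^(M+1) := lt_trans (show M < 2^M from Nat.lt_pow_self (by norm_num))
      (Nat.pow_lt_pow_right (by norm_num) (by omega))
    omega
  calc ∑ n ∈ u, Gfun α n ≤ ∑ n ∈ Ioc (2^K) (2^(M+1)), Gfun α n :=
        Finset.sum_le_sum_of_subset_of_nonneg hsub (fun i _ _ => Gfun_nonneg α i)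
    _ ≤ ∑ k ∈ Icc K M, (4 * Real.log 2 ^ α) * (k:ℝ)^(α-1) := interval_le α hα K hK M
    _ = (4 * Real.log 2 ^ α) * ∑ k ∈ Icc K M, (k:ℝ)^(α-1) := by rw [mul_sum]
    _ ≤ (4 * Real.log 2 ^ α) * (((2:ℝ)^(1-α)/(-α)) * (K:ℝ)^α) :=
        mul_le_mul_of_nonneg_left (telescope α hα K M hK) (nonneg_const α)
    _ = _ := by ring

lemma summable_Gfun (α : ℝ) (hα : α < 0) : Summable (Gfun α) := by
  apply summable_of_sum_le (fun n => Gfun_nonneg α n)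
  intro u
  show ∑ n ∈ u, Gfun α n
    ≤ (∑ n ∈ range 3, Gfun α n) + (4 * Real.log 2 ^ α) * ((2:ℝ)^(1-α)/(-α)) * ((1:ℕ):ℝ)^α
  rw [← Finset.sum_filter_add_sum_filter_not u (fun n => n ≤ 2)]
  apply add_le_add
  · apply Finset.sum_le_sum_of_subset_of_nonneg
    · intro n hn
      simp only [mem_filter] at hn
      simp only [mem_range]
      omega
    · intro i _ _
      exact Gfun_nonneg α i
  · apply finsetsum_le α hα 1 le_rfl
    intro n hn
    simp only [mem_filter, not_le] at hn
    omega

lemma swap_sum (α : ℝ) (N : ℕ) :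
    ∑ n ∈ Icc 1 N, ∑ p ∈ n.primeFactors, Real.log p ^ α
      = ∑ p ∈ (range (N+1)).filter Nat.Prime, Real.log p ^ α * ((N / p : ℕ) : ℝ) := by
  calc ∑ n ∈ Icc 1 N, ∑ p ∈ n.primeFactors, Real.log p ^ α
      = ∑ n ∈ Icc 1 N, ∑ p ∈ range (N+1),
          (if p ∈ n.primeFactors then Real.log p ^ α else 0) := by
        apply Finset.sum_congr rfl
        intro n hn
        rw [← Finset.sum_filter]
        apply Finset.sum_congr _ (fun _ _ => rfl)
        ext q
        simp only [mem_filter, mem_range, Nat.lt_succ_iff]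
        constructor
        · intro h
          exact ⟨le_trans (Nat.le_of_mem_primeFactors h) (Finset.mem_Icc.mp hn).2, h⟩
        · exact fun h => h.2
    _ = ∑ p ∈ range (N+1), ∑ n ∈ Icc 1 N,
          (if p ∈ n.primeFactors then Real.log p ^ α else 0) := Finset.sum_comm
    _ = ∑ p ∈ range (N+1),
          (if p.Prime then Real.log p ^ α * ((N / p : ℕ) : ℝ) else 0) := by
        apply Finset.sum_congr rfl
        intro p _
        by_cases hpp : p.Prime
        · rw [if_pos hpp, ← Finset.sum_filter, Finset.sum_const, nsmul_eq_mul]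
          have hfe : (Icc 1 N).filter (fun n => p ∈ n.primeFactors)
              = (Ioc 0 N).filter (fun n => p ∣ n) := by
            ext n
            simp only [mem_filter, Finset.mem_Icc, Finset.mem_Ioc, Nat.mem_primeFactors]
            constructor
            · rintro ⟨⟨h1, h2⟩, _, hdvd, _⟩
              exact ⟨⟨by omega, h2⟩, hdvd⟩
            · rintro ⟨⟨h1, h2⟩, hdvd⟩
              exact ⟨⟨by omega, h2⟩, hpp, hdvd, by omega⟩
          rw [hfe, Nat.Ioc_filter_dvd_card_eq_div]
          ring
        · rw [if_neg hpp]
          apply Finset.sum_eq_zero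
          intro n _
          rw [if_neg]
          intro h
          exact hpp (Nat.prime_of_mem_primeFactors h)
    _ = _ := (Finset.sum_filter _ _).symm

lemma E_le (α : ℝ) (hα : α < 0) (x : ℝ) (hx : 4 ≤ x) :
    ∑ p ∈ (range (⌊x⌋₊+1)).filter Nat.Prime, Real.log p ^ α
      ≤ Real.log 2 ^ α * (Real.sqrt x + 1) + (Real.log x / 2) ^ α * (x + 1) := by
  have hx0 : (0:ℝ) < x := by linarith
  have hlx : 0 < Real.log x := Real.log_pos (by linarith)
  have hsx : (0:ℝ) < Real.sqrt x := Real.sqrt_pos.mpr hx0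
  have hL2 : (0:ℝ) < Real.log 2 := Real.log_pos (by norm_num)
  set N := ⌊x⌋₊ with hN
  set P := (range (N+1)).filter Nat.Prime with hP
  rw [← Finset.sum_filter_add_sum_filter_not P (fun p : ℕ => (p:ℝ) ≤ Real.sqrt x)]
  apply add_le_add
  · -- small primes
    calc ∑ p ∈ P.filter (fun p : ℕ => (p:ℝ) ≤ Real.sqrt x), Real.log p ^ α
        ≤ (P.filter (fun p : ℕ => (p:ℝ) ≤ Real.sqrt x)).card • (Real.log 2 ^ α) := by
          apply Finset.sum_le_card_nsmul
          intro p hp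
          simp only [hP, mem_filter, mem_range] at hp
          apply Real.rpow_le_rpow_of_nonpos hL2 _ hα.le
          apply Real.log_le_log (by norm_num)
          exact_mod_cast hp.1.2.two_le
      _ ≤ (⌊Real.sqrt x⌋₊ + 1) • (Real.log 2 ^ α) := by
          apply nsmul_le_nsmul_left (Real.rpow_nonneg hL2.le α)
          calc (P.filter (fun p : ℕ => (p:ℝ) ≤ Real.sqrt x)).card
              ≤ (range (⌊Real.sqrt x⌋₊ + 1)).card := by
                apply Finset.card_le_card
                intro p hp
                simp only [mem_filter] at hp
                simp only [mem_range]
                have := Nat.le_floor hp.2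
                omega
            _ = ⌊Real.sqrt x⌋₊ + 1 := Finset.card_range _
      _ ≤ Real.log 2 ^ α * (Real.sqrt x + 1) := by
          rw [nsmul_eq_mul, mul_comm]
          apply mul_le_mul_of_nonneg_left _ (Real.rpow_nonneg hL2.le α)
          push_cast
          have := Nat.floor_le hsx.le
          linarith
  · -- big primes
    calc ∑ p ∈ P.filter (fun p : ℕ => ¬ (p:ℝ) ≤ Real.sqrt x), Real.log p ^ α
        ≤ (P.filter (fun p : ℕ => ¬ (p:ℝ) ≤ Real.sqrt x)).card • ((Real.log x / 2) ^ α) := by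
          apply Finset.sum_le_card_nsmul
          intro p hp
          simp only [hP, mem_filter, not_le] at hp
          apply Real.rpow_le_rpow_of_nonpos (by linarith) _ hα.le
          rw [← Real.log_sqrt hx0.le]
          exact Real.log_le_log hsx hp.2.le
      _ ≤ (N + 1) • ((Real.log x / 2) ^ α) := by
          apply nsmul_le_nsmul_left (Real.rpow_nonneg (by linarith) α)
          calc (P.filter (fun p : ℕ => ¬ (p:ℝ) ≤ Real.sqrt x)).card
              ≤ P.card := Finset.card_le_card (Finset.filter_subset _ _)
            _ ≤ (range (N+1)).card := Finset.card_le_card (Finset.filter_subset _ _)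
            _ = N + 1 := Finset.card_range _
      _ ≤ (Real.log x / 2) ^ α * (x + 1) := by
          rw [nsmul_eq_mul, mul_comm]
          apply mul_le_mul_of_nonneg_left _ (Real.rpow_nonneg (by linarith) α)
          push_cast
          have := Nat.floor_le hx0.le
          rw [← hN] at this
          linarith

set_option maxHeartbeats 1000000 in
/-- For `α < 0`, the series `c_α = ∑_p (log p)^α/p` converges, and
`∑_{n≤x} ∑_{p|n} (log p)^α = c_α·x + O(x·(log x)^α)` as `x → ∞`. -/
theorem statement10 (α : ℝ) (hα : α < 0) :
    Summable (fun p : Nat.Primes => Real.log p ^ α / (p : ℝ)) ∧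
    ((fun x : ℝ =>
        (∑ n ∈ Finset.Icc 1 ⌊x⌋₊,
            ∑ p ∈ n.primeFactors, Real.log p ^ α) -
          (∑' p : Nat.Primes, Real.log p ^ α / (p : ℝ)) * x) =O[atTop]
      (fun x : ℝ => x * Real.log x ^ α)) := by
  have hna : (0:ℝ) < -α := by linarith
  have hG := summable_Gfun α hα
  have hind : Set.indicator {n : ℕ | n.Prime} (fun n : ℕ => Real.log n ^ α / n) = Gfun α := by
    funext n
    simp only [Set.indicator_apply, Set.mem_setOf_eq, Gfun]
  have hsub : Summable (fun p : Nat.Primes => Real.log p ^ α / (p : ℝ)) := by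
    have h2 := (summable_subtype_iff_indicator
      (s := {n : ℕ | n.Prime}) (f := fun n : ℕ => Real.log n ^ α / n)).mpr
      (by rw [hind]; exact hG)
    exact h2
  refine ⟨hsub, ?_⟩
  have hceq : (∑' p : Nat.Primes, Real.log p ^ α / (p : ℝ)) = ∑' n : ℕ, Gfun α n := by
    have h2 := _root_.tsum_subtype {n : ℕ | n.Prime} (fun n : ℕ => Real.log n ^ α / n)
    rw [hind] at h2
    exact h2
  have hL2 : (0:ℝ) < Real.log 2 := Real.log_pos (by norm_num)
  set CT : ℝ := (4 * Real.log 2 ^ α) * ((2:ℝ)^((1:ℝ)-α)/(-α)) with hCT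
  have hCTnn : 0 ≤ CT := by
    apply mul_nonneg (nonneg_const α)
    exact le_of_lt (div_pos (Real.rpow_pos_of_pos (by norm_num) _) hna)
  set C : ℝ := 4 * Real.log 2 ^ α + 4 * (2:ℝ)^(-α) + CT / (2*Real.log 2)^α with hC
  rw [Asymptotics.isBigO_iff]
  refine ⟨C, ?_⟩
  have hr : (0:ℝ) < 1/(2*(-α)) := by positivity
  have hlo := (isLittleO_log_rpow_atTop hr).bound one_pos
  filter_upwards [eventually_ge_atTop (4:ℝ), hlo] with x hx4 hxlo
  rw [hceq]
  have hx0 : (0:ℝ) < x := by linarith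
  have hx1 : (1:ℝ) < x := by linarith
  have hlx : 0 < Real.log x := Real.log_pos hx1
  have hlog4 : Real.log 4 = 2 * Real.log 2 := by
    rw [show (4:ℝ) = 2^2 by norm_num, Real.log_pow]; push_cast; ring
  have hlx4 : 2 * Real.log 2 ≤ Real.log x := by
    rw [← hlog4]; exact Real.log_le_log (by norm_num) hx4
  -- sqrt bounds
  have hsqrt_bound : Real.log x ^ (-α) ≤ Real.sqrt x := by
    rw [Real.norm_eq_abs, Real.norm_eq_abs, one_mul] at hxlo
    have h1 : Real.log x ≤ x ^ (1/(2*(-α))) := by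
      calc Real.log x ≤ |Real.log x| := le_abs_self _
        _ ≤ |x ^ (1/(2*(-α)))| := hxlo
        _ = x ^ (1/(2*(-α))) := abs_of_nonneg (Real.rpow_nonneg hx0.le _)
    calc Real.log x ^ (-α) ≤ (x ^ (1/(2*(-α)))) ^ (-α) :=
        Real.rpow_le_rpow hlx.le h1 hna.le
      _ = x ^ ((1/(2*(-α))) * (-α)) := (Real.rpow_mul hx0.le _ _).symm
      _ = Real.sqrt x := by
          rw [show (1/(2*(-α))) * (-α) = (1:ℝ)/2 by
            have hne : α ≠ 0 := ne_of_lt hα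
            field_simp]
          exact (Real.sqrt_eq_rpow x).symm
  have hsx0 : (0:ℝ) < Real.sqrt x := Real.sqrt_pos.mpr hx0
  have hsx1 : (1:ℝ) ≤ Real.sqrt x := by
    nlinarith [Real.sq_sqrt hx0.le, Real.sqrt_nonneg x]
  have hR : Real.sqrt x ≤ x * Real.log x ^ α := by
    have ht : 0 < Real.log x ^ (-α) := Real.rpow_pos_of_pos hlx _
    have h2' : Real.log x ^ α = (Real.log x ^ (-α))⁻¹ := by
      rw [← Real.rpow_neg hlx.le, neg_neg]
    rw [h2']
    have hmul : Real.sqrt x * Real.log x ^ (-α) ≤ x := by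
      have := mul_le_mul_of_nonneg_left hsqrt_bound (Real.sqrt_nonneg x)
      rwa [Real.mul_self_sqrt hx0.le] at this
    calc Real.sqrt x
        = (Real.sqrt x * Real.log x ^ (-α)) * (Real.log x ^ (-α))⁻¹ := by
          field_simp
      _ ≤ x * (Real.log x ^ (-α))⁻¹ :=
          mul_le_mul_of_nonneg_right hmul (inv_nonneg.mpr ht.le)
  set N := ⌊x⌋₊ with hN
  set K := ⌊Real.log x / Real.log 2⌋₊ with hK
  have hNx : (N:ℝ) ≤ x := Nat.floor_le hx0.le
  have hxN : x < N + 1 := Nat.lt_floor_add_one x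
  have hK1 : 1 ≤ K := by
    rw [hK]
    apply Nat.le_floor
    rw [Nat.cast_one, le_div_iff₀ hL2]
    linarith
  have h2K : ((2:ℕ)^K : ℝ) ≤ x := by
    push_cast
    have h1 : (K:ℝ) ≤ Real.log x / Real.log 2 := Nat.floor_le (by positivity)
    have h2 : (K:ℝ) * Real.log 2 ≤ Real.log x := by
      rw [← le_div_iff₀ hL2]; exact h1
    calc ((2:ℝ))^K = Real.exp (Real.log ((2:ℝ)^K)) := (Real.exp_log (by positivity)).symm
      _ = Real.exp (K * Real.log 2) := by rw [Real.log_pow]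
      _ ≤ Real.exp (Real.log x) := Real.exp_le_exp.mpr h2
      _ = x := Real.exp_log hx0
  have hKlog : Real.log x / (2 * Real.log 2) ≤ (K:ℝ) := by
    have h1 : Real.log x / Real.log 2 - 1 < (K:ℝ) := Nat.sub_one_lt_floor _
    have h2 : 1 ≤ Real.log x / (2 * Real.log 2) := by
      rw [le_div_iff₀ (by positivity)]; linarith
    have h3 : Real.log x / Real.log 2 = 2 * (Real.log x / (2*Real.log 2)) := by
      field_simp
    linarith [h3 ▸ h1]
  set P := (range (N+1)).filter Nat.Prime with hP
  have hsplit := Summable.sum_add_tsum_compl (s := range (N+1)) hG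
  set T : ℝ := ∑' (n : ↥(((range (N+1) : Finset ℕ) : Set ℕ)ᶜ)), Gfun α ↑n with hT
  have hDsum : ∑ n ∈ range (N+1), Gfun α n = ∑ p ∈ P, Real.log p ^ α / p := by
    rw [hP, Finset.sum_filter]
    exact Finset.sum_congr rfl (fun n _ => by unfold Gfun; exact if_congr Iff.rfl rfl rfl)
  have hid : (∑ n ∈ Icc 1 N, ∑ p ∈ n.primeFactors, Real.log p ^ α)
        - (∑' n : ℕ, Gfun α n) * x
      = (∑ p ∈ P, (Real.log p ^ α * ((N / p : ℕ):ℝ) - Real.log p ^ α / p * x)) - T * x := by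
    rw [swap_sum α N, ← hsplit, hDsum, add_mul, Finset.sum_mul, Finset.sum_sub_distrib]
    rw [← hP]
    ring
  have hTnn : 0 ≤ T := tsum_nonneg (fun n => Gfun_nonneg α _)
  have hTle : T ≤ CT * ((K:ℝ))^α := by
    apply Summable.tsum_le_of_sum_le (hG.subtype _)
    intro u
    have hu : ∀ n ∈ u.map (Function.Embedding.subtype _), 2^K < n := by
      intro n hn
      rw [Finset.mem_map] at hn
      obtain ⟨i, _, rfl⟩ := hn
      have hi := i.2
      simp only [Set.mem_compl_iff, Finset.coe_range, Set.mem_Iio, not_lt] at hi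
      have : x < (i : ℕ) := by
        calc x < N + 1 := hxN
          _ ≤ (i:ℕ) := by exact_mod_cast hi
      have h2 : ((2:ℕ)^K : ℝ) < (i:ℕ) := lt_of_le_of_lt h2K this
      exact_mod_cast h2
    have := finsetsum_le α hα K hK1 (u.map (Function.Embedding.subtype _)) hu
    rw [Finset.sum_map] at this
    calc ∑ i ∈ u, Gfun α (i : ℕ) ≤ _ := this
      _ = CT * ((K:ℝ))^α := by rw [hCT]
  have hKα : ((K:ℝ))^α ≤ (Real.log x / (2*Real.log 2))^α :=
    Real.rpow_le_rpow_of_nonpos (div_pos hlx (by linarith)) hKlog hα.le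
  have hperp : ∀ p ∈ P, |Real.log p ^ α * ((N / p : ℕ):ℝ) - Real.log p ^ α / p * x|
      ≤ 2 * Real.log p ^ α := by
    intro p hp
    simp only [hP, mem_filter, mem_range] at hp
    have hp2 : 2 ≤ p := hp.2.two_le
    have hppos : (0:ℝ) < p := by exact_mod_cast (by omega : 0 < p)
    have hp1 : (1:ℝ) ≤ p := by exact_mod_cast (by omega : 1 ≤ p)
    have hfnn : 0 ≤ Real.log p ^ α :=
      Real.rpow_nonneg (Real.log_nonneg (by exact_mod_cast (by omega : 1 ≤ p))) α
    have hup : ((N / p : ℕ):ℝ) ≤ x / p := by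
      calc ((N / p : ℕ):ℝ) ≤ (N:ℝ) / p := Nat.cast_div_le
        _ ≤ x / p := by gcongr
    have hdown : x / p - 2 ≤ ((N / p : ℕ):ℝ) := by
      have hmod := Nat.div_add_mod N p
      have hmodlt : N % p < p := Nat.mod_lt _ (by omega)
      have hNlt : (N:ℝ) < p * ((N/p : ℕ):ℝ) + p := by
        have hcast := congrArg (Nat.cast : ℕ → ℝ) hmod
        push_cast at hcast
        have h2 : ((N % p : ℕ):ℝ) < p := by exact_mod_cast hmodlt
        linarith
      rw [sub_le_iff_le_add, div_le_iff₀ hppos]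
      linarith [hxN, hNlt, hp1]
    rw [show Real.log p ^ α * ((N / p : ℕ):ℝ) - Real.log p ^ α / p * x
        = Real.log p ^ α * (((N / p : ℕ):ℝ) - x / p) from by field_simp]
    rw [abs_mul, abs_of_nonneg hfnn]
    have habs : |((N / p : ℕ):ℝ) - x / p| ≤ 2 := abs_le.mpr ⟨by linarith, by linarith⟩
    calc Real.log p ^ α * |((N / p : ℕ):ℝ) - x / p| ≤ Real.log p ^ α * 2 :=
        mul_le_mul_of_nonneg_left habs hfnn
      _ = 2 * Real.log p ^ α := by ring
  have hsum_bound : |∑ p ∈ P, (Real.log p ^ α * ((N / p : ℕ):ℝ) - Real.log p ^ α / p * x)|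
      ≤ 2 * ∑ p ∈ P, Real.log p ^ α := by
    calc |∑ p ∈ P, (Real.log p ^ α * ((N / p : ℕ):ℝ) - Real.log p ^ α / p * x)|
        ≤ ∑ p ∈ P, |Real.log p ^ α * ((N / p : ℕ):ℝ) - Real.log p ^ α / p * x| :=
          Finset.abs_sum_le_sum_abs _ _
      _ ≤ ∑ p ∈ P, 2 * Real.log p ^ α := Finset.sum_le_sum hperp
      _ = 2 * ∑ p ∈ P, Real.log p ^ α := by rw [Finset.mul_sum]
  have hE : ∑ p ∈ P, Real.log p ^ α
      ≤ Real.log 2 ^ α * (Real.sqrt x + 1) + (Real.log x / 2) ^ α * (x + 1) := by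
    have := E_le α hα x hx4
    rw [← hN, ← hP] at this
    exact this
  -- final assembly
  have hRHSnn : 0 ≤ x * Real.log x ^ α :=
    mul_nonneg hx0.le (Real.rpow_nonneg hlx.le α)
  rw [Real.norm_eq_abs, Real.norm_eq_abs, abs_of_nonneg hRHSnn, hid]
  have hdivrpow : (Real.log x / 2) ^ α = Real.log x ^ α * (2:ℝ)^(-α) := by
    rw [Real.div_rpow hlx.le (by norm_num), Real.rpow_neg (by norm_num)]
    ring
  have hdivrpow2 : (Real.log x / (2*Real.log 2)) ^ α
      = Real.log x ^ α / (2*Real.log 2)^α := by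
    rw [Real.div_rpow hlx.le (by positivity)]
  have h2L2pos : (0:ℝ) < (2*Real.log 2)^α := Real.rpow_pos_of_pos (by linarith) α
  calc |(∑ p ∈ P, (Real.log p ^ α * ((N / p : ℕ):ℝ) - Real.log p ^ α / p * x)) - T * x|
      ≤ |∑ p ∈ P, (Real.log p ^ α * ((N / p : ℕ):ℝ) - Real.log p ^ α / p * x)| + |T * x| := by
        exact abs_sub _ _
    _ ≤ 2 * ∑ p ∈ P, Real.log p ^ α + T * x := by
        apply add_le_add hsum_bound
        rw [abs_of_nonneg (mul_nonneg hTnn hx0.le)]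
    _ ≤ 2 * (Real.log 2 ^ α * (Real.sqrt x + 1) + (Real.log x / 2) ^ α * (x + 1))
          + (CT * ((Real.log x / (2*Real.log 2))^α)) * x := by
        apply add_le_add
        · apply mul_le_mul_of_nonneg_left hE (by norm_num)
        · apply mul_le_mul_of_nonneg_right _ hx0.le
          exact le_trans hTle (mul_le_mul_of_nonneg_left hKα hCTnn)
    _ ≤ 4 * Real.log 2 ^ α * (x * Real.log x ^ α)
          + 4 * (2:ℝ)^(-α) * (x * Real.log x ^ α)
          + CT / (2*Real.log 2)^α * (x * Real.log x ^ α) := by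
        have hc1 : 0 ≤ Real.log 2 ^ α := Real.rpow_nonneg hL2.le α
        have hc2 : 0 ≤ (Real.log x / 2) ^ α := Real.rpow_nonneg (by linarith) α
        have t1 : 2 * (Real.log 2 ^ α * (Real.sqrt x + 1))
            ≤ 4 * Real.log 2 ^ α * (x * Real.log x ^ α) := by
          calc 2 * (Real.log 2 ^ α * (Real.sqrt x + 1))
              ≤ 2 * (Real.log 2 ^ α * (2 * Real.sqrt x)) := by
                apply mul_le_mul_of_nonneg_left _ (by norm_num)
                apply mul_le_mul_of_nonneg_left _ hc1
                linarith
            _ = 4 * Real.log 2 ^ α * Real.sqrt x := by ring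
            _ ≤ 4 * Real.log 2 ^ α * (x * Real.log x ^ α) := by
                apply mul_le_mul_of_nonneg_left hR (by positivity)
        have t2 : 2 * ((Real.log x / 2) ^ α * (x + 1))
            ≤ 4 * (2:ℝ)^(-α) * (x * Real.log x ^ α) := by
          calc 2 * ((Real.log x / 2) ^ α * (x + 1))
              ≤ 2 * ((Real.log x / 2) ^ α * (2 * x)) := by
                apply mul_le_mul_of_nonneg_left _ (by norm_num)
                apply mul_le_mul_of_nonneg_left _ hc2
                linarith
            _ = 4 * (2:ℝ)^(-α) * (x * Real.log x ^ α) := by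
                rw [hdivrpow]; ring
        have t3 : (CT * ((Real.log x / (2*Real.log 2))^α)) * x
            = CT / (2*Real.log 2)^α * (x * Real.log x ^ α) := by
          rw [hdivrpow2]; field_simp
        rw [mul_add]
        linarith [t1, t2]
    _ = C * (x * Real.log x ^ α) := by rw [hC]; ring
end

section
/- Let L be slowly varying, let ρ > 0, and let h : [2,∞) → (0,∞) be non-decreasing. If Σ_{n≤x} Σ_{p^ν||n} ν·h(p) = (ζ(ρ+1)/(ρ+1) + o(1)) · x^{ρ+1} L(x)/log x as x → ∞, then h(x) = O(x^ρ L(x)). -/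
open Filter Finset

private def chebP (N : ℕ) : Finset ℕ := (Finset.range (N+1)).filter Nat.Prime

private lemma chebP_mono {M N : ℕ} (h : M ≤ N) : chebP M ⊆ chebP N :=
  Finset.filter_subset_filter _ (Finset.range_subset_range.2 (by omega))

private lemma mem_chebP {N p : ℕ} : p ∈ chebP N ↔ p ≤ N ∧ p.Prime := by
  simp [chebP, Nat.lt_succ_iff, and_comm]

private lemma cheb_lower (n : ℕ) (hn : 4 ≤ n) :
    4 ^ n < n * (2*n) ^ ((chebP (2*n)).card) := by
  refine (Nat.four_pow_lt_mul_centralBinom n hn).trans_le (Nat.mul_le_mul_left _ ?_)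
  have h0 : n.centralBinom ≠ 0 := n.centralBinom_ne_zero
  calc n.centralBinom
      = ∏ p ∈ (n.centralBinom).primeFactors, p ^ (n.centralBinom).factorization p := by
        conv_lhs => rw [← Nat.factorization_prod_pow_eq_self h0]
        rfl
    _ ≤ (2*n) ^ (n.centralBinom).primeFactors.card := by
        apply Finset.prod_le_pow_card
        intro p hp
        rw [Nat.centralBinom]
        exact Nat.pow_factorization_choose_le (by omega)
    _ ≤ (2*n) ^ (chebP (2*n)).card := by
        apply Nat.pow_le_pow_right (by omega)
        apply Finset.card_le_card
        intro p hp
        have hp' := Nat.prime_of_mem_primeFactors hp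
        have hsupp : (n.centralBinom).factorization p ≠ 0 := by
          rw [← Finsupp.mem_support_iff, Nat.support_factorization]; exact hp
        have h1 : 1 ≤ (n.centralBinom).factorization p := Nat.one_le_iff_ne_zero.2 hsupp
        have hple : p ≤ 2*n := by
          calc p = p ^ 1 := (pow_one p).symm
            _ ≤ p ^ (n.centralBinom).factorization p := Nat.pow_le_pow_right hp'.one_lt.le h1
            _ ≤ 2*n := by rw [Nat.centralBinom]; exact Nat.pow_factorization_choose_le (by omega)
        exact mem_chebP.2 ⟨hple, hp'⟩

private lemma cheb_upper_pow (N m : ℕ) :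
    (m+1) ^ ((chebP N).filter (fun p => m < p)).card ≤ 4 ^ N := by
  calc (m+1) ^ ((chebP N).filter (fun p => m < p)).card
      ≤ ∏ p ∈ (chebP N).filter (fun p => m < p), p := by
        apply Finset.pow_card_le_prod
        intro p hp
        have := (Finset.mem_filter.1 hp).2
        omega
    _ ≤ ∏ p ∈ chebP N, p := by
        apply Finset.prod_le_prod_of_subset_of_one_le' (Finset.filter_subset _ _)
        intro p hp _
        exact (mem_chebP.1 hp).2.one_lt.le
    _ ≤ 4 ^ N := primorial_le_4_pow N

private lemma cheb_upper_card (N m : ℕ) :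
    (chebP N).card ≤ (m+1) + ((chebP N).filter (fun p => m < p)).card := by
  have := Finset.card_filter_add_card_filter_not (s := chebP N)
    (p := fun p => m < p)
  have h2 : ((chebP N).filter (fun p => ¬ m < p)).card ≤ m + 1 := by
    have hsub : (chebP N).filter (fun p => ¬ m < p) ⊆ Finset.range (m+1) := by
      intro p hp
      have := (Finset.mem_filter.1 hp).2
      simp only [Finset.mem_range]; omega
    simpa using Finset.card_le_card hsub
  omega

private lemma cheb_lower_real (n : ℕ) (hn : 4 ≤ n) :
    (n:ℝ) * Real.log 4 ≤ Real.log n + ((chebP (2*n)).card : ℝ) * Real.log (2*n) := by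
  have hnat := (cheb_lower n hn).le
  have hcast : ((4:ℝ)) ^ n ≤ (n:ℝ) * ((2*n:ℕ):ℝ) ^ ((chebP (2*n)).card) := by
    exact_mod_cast Nat.cast_le.2 hnat
  have h4 : (0:ℝ) < 4 ^ n := by positivity
  have hlog := Real.log_le_log h4 hcast
  rw [Real.log_pow, Real.log_mul (by positivity) (by positivity), Real.log_pow] at hlog
  push_cast at hlog ⊢
  linarith

private lemma cheb_upper_real (N m : ℕ) :
    ((((chebP N).filter (fun p => m < p)).card : ℝ)) * Real.log (m+1) ≤ (N:ℝ) * Real.log 4 := by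
  have hnat := cheb_upper_pow N m
  have hcast : ((m+1:ℕ):ℝ) ^ (((chebP N).filter (fun p => m < p)).card) ≤ (4:ℝ) ^ N := by
    exact_mod_cast Nat.cast_le.2 hnat
  have hpos : (0:ℝ) < ((m+1:ℕ):ℝ) ^ (((chebP N).filter (fun p => m < p)).card) := by positivity
  have hlog := Real.log_le_log hpos hcast
  rw [Real.log_pow, Real.log_pow] at hlog
  push_cast at hlog ⊢
  linarith

private lemma tendsto_log_div : Tendsto (fun x : ℝ => Real.log x / x) atTop (nhds 0) :=
  Real.isLittleO_log_id_atTop.tendsto_div_nhds_zero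

private lemma tendsto_sqrt_log_div : Tendsto (fun x : ℝ => Real.sqrt x * Real.log x / x) atTop (nhds 0) := by
  have h := (isLittleO_log_rpow_atTop (r := (1:ℝ)/2) (by norm_num)).tendsto_div_nhds_zero
  apply h.congr'
  filter_upwards [eventually_gt_atTop (0:ℝ)] with x hx
  rw [← Real.sqrt_eq_rpow]
  rw [div_eq_div_iff (by positivity) (by positivity)]
  rw [mul_comm (Real.sqrt x) (Real.log x), mul_assoc, Real.mul_self_sqrt hx.le]

private lemma cheb_real_aux : ∀ᶠ x : ℝ in atTop,
    x ≤ ((4*x*Real.log 4 - Real.log (4*x))/Real.log (8*x)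
      - Real.sqrt x - 2 - 2*Real.log 4 * x / Real.log x) * Real.log x := by
  set a := Real.log 4 with ha
  have ha1 : 1 < a := by
    have := Real.log_two_gt_d9
    have : Real.log 4 = 2 * Real.log 2 := by
      rw [show (4:ℝ) = 2^2 by norm_num, Real.log_pow]; push_cast; ring
    rw [ha, this]; nlinarith [Real.log_two_gt_d9]
  -- pieces
  have t2 : Tendsto (fun x : ℝ => Real.log (4*x) / x) atTop (nhds 0) := by
    have : Tendsto (fun x : ℝ => Real.log 4 / x + Real.log x / x) atTop (nhds (0 + 0)) :=
      (tendsto_const_nhds.div_atTop tendsto_id).add tendsto_log_div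
    rw [add_zero] at this
    apply this.congr'
    filter_upwards [eventually_gt_atTop (0:ℝ)] with x hx
    rw [Real.log_mul (by norm_num) hx.ne', add_div]
  have tu : Tendsto (fun x : ℝ => 4*a - Real.log (4*x)/x) atTop (nhds (4*a - 0)) :=
    tendsto_const_nhds.sub t2
  have tv : Tendsto (fun x : ℝ => Real.log x / Real.log (8*x)) atTop (nhds 1) := by
    have h0 : Tendsto (fun x : ℝ => Real.log 8 / Real.log x) atTop (nhds 0) :=
      tendsto_const_nhds.div_atTop Real.tendsto_log_atTop
    have h1 : Tendsto (fun x : ℝ => 1 / (Real.log 8 / Real.log x + 1)) atTop (nhds 1) := by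
      have h2 : Tendsto (fun x : ℝ => Real.log 8 / Real.log x + 1) atTop (nhds (0 + 1)) :=
        h0.add tendsto_const_nhds
      have h3 := (tendsto_const_nhds (x := (1:ℝ)) (f := atTop)).div h2 (by norm_num)
      simpa [Pi.div_def] using h3
    apply h1.congr'
    filter_upwards [eventually_ge_atTop (2:ℝ)] with x hx
    have hlx : 0 < Real.log x := Real.log_pos (by linarith)
    rw [Real.log_mul (by norm_num) (by linarith)]
    field_simp
  have tw : Tendsto (fun x : ℝ => (Real.sqrt x * Real.log x / x + 2 * (Real.log x / x)) + 2*a)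
      atTop (nhds ((0 + 2*0) + 2*a)) :=
    ((tendsto_sqrt_log_div.add (tendsto_const_nhds.mul tendsto_log_div))).add tendsto_const_nhds
  have tfull : Tendsto (fun x : ℝ =>
      (4*a - Real.log (4*x)/x) * (Real.log x / Real.log (8*x))
        - ((Real.sqrt x * Real.log x / x + 2 * (Real.log x / x)) + 2*a))
      atTop (nhds ((4*a - 0) * 1 - ((0 + 2*0) + 2*a))) := (tu.mul tv).sub tw
  have hlim : (4*a - 0) * 1 - ((0 + 2*0) + 2*a) = 2*a := by ring
  rw [hlim] at tfull
  have hev : ∀ᶠ x : ℝ in atTop,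
      (4*a - Real.log (4*x)/x) * (Real.log x / Real.log (8*x))
        - ((Real.sqrt x * Real.log x / x + 2 * (Real.log x / x)) + 2*a)
      = ((4*x*a - Real.log (4*x))/Real.log (8*x) - Real.sqrt x - 2 - 2*a * x / Real.log x)
          * Real.log x / x := by
    filter_upwards [eventually_ge_atTop (2:ℝ)] with x hx
    have hx0 : (0:ℝ) < x := by linarith
    have hlx : 0 < Real.log x := Real.log_pos (by linarith)
    have hl8x : 0 < Real.log (8*x) := Real.log_pos (by nlinarith)
    field_simp
    ring
  have tphi : Tendsto (fun x : ℝ =>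
      ((4*x*a - Real.log (4*x))/Real.log (8*x) - Real.sqrt x - 2 - 2*a * x / Real.log x)
        * Real.log x / x) atTop (nhds (2*a)) := tfull.congr' hev
  have hge : ∀ᶠ x : ℝ in atTop,
      1 ≤ ((4*x*a - Real.log (4*x))/Real.log (8*x) - Real.sqrt x - 2 - 2*a * x / Real.log x)
        * Real.log x / x := by
    exact tphi.eventually (eventually_ge_nhds (by linarith))
  filter_upwards [hge, eventually_gt_atTop (0:ℝ)] with x h1 hx0
  have := (le_div_iff₀ hx0).1 h1
  linarith


private lemma cheb_main : ∀ᶠ n : ℕ in atTop,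
    (n:ℝ) ≤ (((chebP (8*n)) \ (chebP n)).card : ℝ) * Real.log n := by
  have hcomp : ∀ᶠ n : ℕ in atTop,
      (n:ℝ) ≤ ((4*(n:ℝ)*Real.log 4 - Real.log (4*(n:ℝ)))/Real.log (8*(n:ℝ))
        - Real.sqrt (n:ℝ) - 2 - 2*Real.log 4 * (n:ℝ) / Real.log (n:ℝ)) * Real.log (n:ℝ) :=
    (tendsto_natCast_atTop_atTop (R := ℝ)).eventually cheb_real_aux
  filter_upwards [hcomp, eventually_ge_atTop 16] with n haux hn16
  have hn0 : (0:ℝ) < (n:ℝ) := by exact_mod_cast (by omega : 0 < n)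
  have hlogn : (0:ℝ) < Real.log n := Real.log_pos (by exact_mod_cast (by omega : 1 < n))
  have hlog8n : (0:ℝ) < Real.log (8*(n:ℝ)) := Real.log_pos (by
    have h1 : (1:ℝ) ≤ (n:ℝ) := by exact_mod_cast (by omega : 1 ≤ n)
    linarith)
  set c8 : ℝ := ((chebP (8*n)).card : ℝ) with hc8
  set cn : ℝ := ((chebP n).card : ℝ) with hcn
  -- lower bound for c8
  have hlow : 4*(n:ℝ)*Real.log 4 ≤ Real.log (4*(n:ℝ)) + c8 * Real.log (8*(n:ℝ)) := by
    have := cheb_lower_real (4*n) (by omega)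
    rw [show 2*(4*n) = 8*n from by ring] at this
    push_cast at this
    rw [show (2:ℝ)*(4*(n:ℝ)) = 8*(n:ℝ) from by ring] at this
    push_cast [hc8]
    linarith
  have hc8low : (4*(n:ℝ)*Real.log 4 - Real.log (4*(n:ℝ)))/Real.log (8*(n:ℝ)) ≤ c8 := by
    rw [div_le_iff₀ hlog8n]
    nlinarith
  -- upper bound for cn
  set m := Nat.sqrt n with hm
  set B : ℝ := (((chebP n).filter (fun p => m < p)).card : ℝ) with hB
  have hB0 : 0 ≤ B := by positivity
  have hcard : cn ≤ ((m:ℝ)+1) + B := by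
    have := cheb_upper_card n m
    push_cast [hcn, hB]
    exact_mod_cast this
  have hBlog : B * Real.log ((m:ℝ)+1) ≤ (n:ℝ) * Real.log 4 := by
    have := cheb_upper_real n m
    push_cast at this
    exact this
  have hlogm : Real.log (n:ℝ) / 2 ≤ Real.log ((m:ℝ)+1) := by
    have h1 : (n:ℝ) ≤ ((m:ℝ)+1)^2 := by
      have h1' : n < (m+1)^2 := Nat.lt_succ_sqrt' n
      exact_mod_cast h1'.le
    have h2 := Real.log_le_log hn0 h1
    rw [Real.log_pow] at h2
    push_cast at h2
    linarith
  have hBle : B ≤ 2 * (n:ℝ) * Real.log 4 / Real.log (n:ℝ) := by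
    rw [le_div_iff₀ hlogn]
    nlinarith
  have hmle : (m:ℝ) ≤ Real.sqrt (n:ℝ) := by
    have h1 : ((m:ℝ))^2 ≤ (n:ℝ) := by exact_mod_cast Nat.sqrt_le' n
    have := Real.sqrt_le_sqrt h1
    rwa [Real.sqrt_sq (by positivity)] at this
  have hcnle : cn ≤ Real.sqrt (n:ℝ) + 1 + 2 * (n:ℝ) * Real.log 4 / Real.log (n:ℝ) := by
    linarith
  -- sdiff card
  have hsub : chebP n ⊆ chebP (8*n) := chebP_mono (by omega)
  have hsd : (((chebP (8*n)) \ (chebP n)).card : ℝ) = c8 - cn := by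
    rw [Finset.card_sdiff_of_subset hsub, hc8, hcn]
    push_cast [Nat.cast_sub (Finset.card_le_card hsub)]
    ring
  rw [hsd]
  have hE : (4*(n:ℝ)*Real.log 4 - Real.log (4*(n:ℝ)))/Real.log (8*(n:ℝ))
        - Real.sqrt (n:ℝ) - 2 - 2*Real.log 4 * (n:ℝ) / Real.log (n:ℝ) ≤ c8 - cn := by
    have : 2 * (n:ℝ) * Real.log 4 / Real.log (n:ℝ) = 2*Real.log 4 * (n:ℝ) / Real.log (n:ℝ) := by ring
    rw [this] at hcnle
    linarith
  calc (n:ℝ) ≤ _ := haux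
    _ ≤ (c8 - cn) * Real.log n := mul_le_mul_of_nonneg_right hE hlogn.le


/-- For `L` slowly varying, `ρ > 0` and `h : [2,∞) → (0,∞)`
non-decreasing: if `∑_{n≤x} ∑_{p^ν||n} ν·h(p) = (ζ(ρ+1)/(ρ+1) + o(1))·x^{ρ+1}L(x)/log x`,
then `h(x) = O(x^ρ L(x))`. -/
theorem statement12
    (x₀ : ℝ) (hx₀ : 0 < x₀) (L : ℝ → ℝ)
    (hLpos : ∀ x, x₀ ≤ x → 0 < L x)
    (hLcont : ContinuousOn L (Set.Ici x₀))
    (hLslow : ∀ c : ℝ, 0 < c →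
      Tendsto (fun x : ℝ => L (c * x) / L x) atTop (nhds 1))
    (ρ : ℝ) (hρ : 0 < ρ)
    (h : ℝ → ℝ) (hpos : ∀ x : ℝ, 2 ≤ x → 0 < h x)
    (hmono : ∀ x y : ℝ, 2 ≤ x → x ≤ y → h x ≤ h y)
    (hyp : Tendsto (fun x : ℝ =>
        (∑ n ∈ Finset.Icc 1 ⌊x⌋₊,
            ∑ p ∈ n.primeFactors, (n.factorization p : ℝ) * h p) *
          Real.log x / (x ^ (ρ + 1) * L x))
      atTop (nhds ((riemannZeta ((ρ : ℂ) + 1)).re / (ρ + 1)))) :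
    h =O[atTop] (fun x : ℝ => x ^ ρ * L x) := by
  classical
  set S : ℝ → ℝ := fun x => ∑ n ∈ Finset.Icc 1 ⌊x⌋₊,
      ∑ p ∈ n.primeFactors, (n.factorization p : ℝ) * h p with hSdef
  set ℓ : ℝ := (riemannZeta ((ρ : ℂ) + 1)).re / (ρ + 1) with hℓ
  set C : ℝ := |ℓ| + 1 with hC
  have hC0 : 0 < C := by positivity
  -- nonnegativity of the summands
  have hterm_nonneg : ∀ n : ℕ,
      0 ≤ ∑ p ∈ n.primeFactors, (n.factorization p : ℝ) * h p := by
    intro n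
    apply Finset.sum_nonneg
    intro p hp
    have hp' := Nat.prime_of_mem_primeFactors hp
    have h2p : (2:ℝ) ≤ (p:ℝ) := by exact_mod_cast hp'.two_le
    exact mul_nonneg (by positivity) (hpos _ h2p).le
  have hprime_term : ∀ p : ℕ, p.Prime →
      (∑ q ∈ p.primeFactors, (p.factorization q : ℝ) * h q) = h p := by
    intro p hp
    rw [hp.primeFactors, Finset.sum_singleton, hp.factorization_self]
    norm_num
  -- eventual upper bound for S
  have hSbound : ∀ᶠ x : ℝ in atTop, S x * Real.log x ≤ C * (x ^ (ρ+1) * L x) := by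
    have h1 : ∀ᶠ x : ℝ in atTop, S x * Real.log x / (x ^ (ρ+1) * L x) ≤ C := by
      apply hyp.eventually (eventually_le_nhds ?_)
      rw [hC]
      calc ℓ ≤ |ℓ| := le_abs_self ℓ
        _ < |ℓ| + 1 := by linarith
    filter_upwards [h1, eventually_ge_atTop (max x₀ 2)] with x hx hxge
    have hxx₀ : x₀ ≤ x := le_trans (le_max_left _ _) hxge
    have hx2 : (2:ℝ) ≤ x := le_trans (le_max_right _ _) hxge
    have hden : 0 < x ^ (ρ+1) * L x :=
      mul_pos (Real.rpow_pos_of_pos (by linarith) _) (hLpos x hxx₀)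
    exact (div_le_iff₀ hden).1 hx
  -- slowly varying bound
  have hL8 : ∀ᶠ x : ℝ in atTop, L (8*x) ≤ 2 * L x := by
    have h1 := (hLslow 8 (by norm_num)).eventually (eventually_le_nhds (by norm_num : (1:ℝ) < 2))
    filter_upwards [h1, eventually_ge_atTop x₀] with x hx hxx₀
    have hLx : 0 < L x := hLpos x hxx₀
    calc L (8*x) = (L (8*x) / L x) * L x := by field_simp
      _ ≤ 2 * L x := mul_le_mul_of_nonneg_right hx hLx.le
  -- pull back the S bound along x ↦ 8x
  have hmul8 : Tendsto (fun y : ℝ => 8*y) atTop atTop :=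
    Tendsto.const_mul_atTop (by norm_num) tendsto_id
  have hSbound8 : ∀ᶠ y : ℝ in atTop, S (8*y) * Real.log (8*y) ≤ C * ((8*y) ^ (ρ+1) * L (8*y)) :=
    hmul8.eventually hSbound
  have hfloorcheb : ∀ᶠ y : ℝ in atTop,
      ((⌊y⌋₊:ℝ)) ≤ (((chebP (8*⌊y⌋₊)) \ (chebP ⌊y⌋₊)).card : ℝ) * Real.log (⌊y⌋₊ : ℝ) :=
    tendsto_nat_floor_atTop.eventually cheb_main
  -- main estimate
  rw [Asymptotics.isBigO_iff]
  refine ⟨4 * C * 8 ^ (ρ+1), ?_⟩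
  filter_upwards [hSbound8, hL8, hfloorcheb, eventually_ge_atTop (max x₀ 2)]
    with y hS8 hL8y hcheb hyge
  have hyx₀ : x₀ ≤ y := le_trans (le_max_left _ _) hyge
  have hy2 : (2:ℝ) ≤ y := le_trans (le_max_right _ _) hyge
  have hy0 : (0:ℝ) < y := by linarith
  set n : ℕ := ⌊y⌋₊ with hn
  have hn2 : 2 ≤ n := Nat.le_floor (by exact_mod_cast hy2)
  have hny : (n:ℝ) ≤ y := Nat.floor_le hy0.le
  have hyn1 : y < (n:ℝ) + 1 := Nat.lt_floor_add_one y
  set Q : Finset ℕ := (chebP (8*n)) \ (chebP n) with hQ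
  have hQmem : ∀ p ∈ Q, p.Prime ∧ n < p ∧ p ≤ 8*n := by
    intro p hp
    rw [hQ, Finset.mem_sdiff] at hp
    obtain ⟨hp1, hp2⟩ := hp
    obtain ⟨hple, hppr⟩ := mem_chebP.1 hp1
    refine ⟨hppr, ?_, hple⟩
    by_contra hcon
    exact hp2 (mem_chebP.2 ⟨by omega, hppr⟩)
  -- (a) h y * card Q ≤ ∑_{p∈Q} h p
  have ha : h y * (Q.card : ℝ) ≤ ∑ p ∈ Q, h (p:ℝ) := by
    have := Finset.sum_le_sum (s := Q) (f := fun _ => h y) (g := fun p : ℕ => h (p:ℝ)) ?_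
    · simpa [Finset.sum_const, nsmul_eq_mul, mul_comm] using this
    · intro p hp
      obtain ⟨hppr, hnp, _⟩ := hQmem p hp
      apply hmono y p hy2
      have : (n:ℝ) + 1 ≤ (p:ℝ) := by exact_mod_cast hnp
      linarith
  -- (b) ∑_{p∈Q} h p ≤ S (8*y)
  have hb : ∑ p ∈ Q, h (p:ℝ) ≤ S (8*y) := by
    have hQsub : Q ⊆ Finset.Icc 1 ⌊8*y⌋₊ := by
      intro p hp
      obtain ⟨hppr, _, hp8n⟩ := hQmem p hp
      rw [Finset.mem_Icc]
      constructor
      · exact hppr.one_lt.le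
      · apply le_trans hp8n
        apply Nat.le_floor
        push_cast
        linarith
    calc ∑ p ∈ Q, h (p:ℝ)
        = ∑ p ∈ Q, ∑ q ∈ p.primeFactors, ((p:ℕ).factorization q : ℝ) * h q := by
          apply Finset.sum_congr rfl
          intro p hp
          exact (hprime_term p (hQmem p hp).1).symm
      _ ≤ S (8*y) := by
          rw [hSdef]
          apply Finset.sum_le_sum_of_subset_of_nonneg hQsub
          intro i _ _
          exact hterm_nonneg i
  -- (c) y/2 ≤ card Q * log y
  have hlogy : 0 < Real.log y := Real.log_pos (by linarith)
  have hc : y / 2 ≤ (Q.card : ℝ) * Real.log y := by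
    have hlogn_le : Real.log (n:ℝ) ≤ Real.log y := Real.log_le_log (by exact_mod_cast (by omega : 0 < n)) hny
    have h1 : (n:ℝ) ≤ (Q.card : ℝ) * Real.log (n:ℝ) := hcheb
    have h2 : (Q.card : ℝ) * Real.log (n:ℝ) ≤ (Q.card : ℝ) * Real.log y :=
      mul_le_mul_of_nonneg_left hlogn_le (by positivity)
    have h3 : y / 2 ≤ (n:ℝ) := by
      have : (2:ℝ) ≤ (n:ℝ) := by exact_mod_cast hn2
      linarith
    linarith
  -- (d) combine
  have hlog8y : Real.log y ≤ Real.log (8*y) := Real.log_le_log hy0 (by linarith)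
  have hhy : 0 < h y := hpos y hy2
  have hLy : 0 < L y := hLpos y hyx₀
  have hrw : (8*y) ^ (ρ+1) = 8 ^ (ρ+1) * y ^ (ρ+1) := Real.mul_rpow (by norm_num) hy0.le
  have key : h y * (y / 2) ≤ C * (8 ^ (ρ+1) * y ^ (ρ+1) * (2 * L y)) := by
    calc h y * (y / 2) ≤ h y * ((Q.card : ℝ) * Real.log y) :=
          mul_le_mul_of_nonneg_left hc hhy.le
      _ ≤ h y * ((Q.card : ℝ) * Real.log (8*y)) := by
          apply mul_le_mul_of_nonneg_left _ hhy.le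
          exact mul_le_mul_of_nonneg_left hlog8y (by positivity)
      _ = (h y * (Q.card : ℝ)) * Real.log (8*y) := by ring
      _ ≤ (∑ p ∈ Q, h (p:ℝ)) * Real.log (8*y) :=
          mul_le_mul_of_nonneg_right ha (le_trans hlogy.le hlog8y)
      _ ≤ S (8*y) * Real.log (8*y) :=
          mul_le_mul_of_nonneg_right hb (le_trans hlogy.le hlog8y)
      _ ≤ C * ((8*y) ^ (ρ+1) * L (8*y)) := hS8
      _ ≤ C * (8 ^ (ρ+1) * y ^ (ρ+1) * (2 * L y)) := by
          rw [hrw]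
          apply mul_le_mul_of_nonneg_left _ hC0.le
          exact mul_le_mul_of_nonneg_left hL8y
            (mul_nonneg (by positivity) (Real.rpow_pos_of_pos hy0 _).le)
  have hfinal : h y ≤ 4 * C * 8 ^ (ρ+1) * (y ^ ρ * L y) := by
    have hyrw : y ^ (ρ+1) = y ^ ρ * y := Real.rpow_add_one hy0.ne' ρ
    rw [hyrw] at key
    have h2y : h y * (y/2) * (2/y) = h y := by field_simp
    calc h y = h y * (y/2) * (2/y) := h2y.symm
      _ ≤ C * (8 ^ (ρ+1) * (y ^ ρ * y) * (2 * L y)) * (2/y) := by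
          apply mul_le_mul_of_nonneg_right key (by positivity)
      _ = 4 * C * 8 ^ (ρ+1) * (y ^ ρ * L y) * (y / y) := by ring
      _ = 4 * C * 8 ^ (ρ+1) * (y ^ ρ * L y) := by rw [div_self hy0.ne', mul_one]
  have habs1 : |h y| = h y := abs_of_pos hhy
  have habs2 : |y ^ ρ * L y| = y ^ ρ * L y :=
    abs_of_pos (mul_pos (Real.rpow_pos_of_pos hy0 _) hLy)
  rw [Real.norm_eq_abs, Real.norm_eq_abs, habs1, habs2]
  exact hfinal
end

section
/- Let L be slowly varying, let ρ > 0, and let h : [2,∞) → (0,∞) be non-decreasing. If Σ_{n≤x} Σ_{p^ν||n} ν·h(p) = (ζ(ρ+1)/(ρ+1) + o(1)) · x^{ρ+1} L(x)/log x as x → ∞, then also Σ_{n≤x} Σ_{p|n} h(p) = (ζ(ρ+1)/(ρ+1) + o(1)) · x^{ρ+1} L(x)/log x as x → ∞, where the inner sum in the second expression is over the distinct prime divisors p of n. -/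
open Filter Finset

/- ### Combinatorial lemmas -/

private lemma swap13 (N : ℕ) (g : ℕ → ℕ → ℝ) :
    ∑ n ∈ Icc 1 N, ∑ p ∈ n.primeFactors, g p n
      = ∑ p ∈ (Icc 1 N).filter Nat.Prime, ∑ n ∈ (Icc 1 N).filter (fun n => p ∣ n), g p n := by
  have step1 : ∀ n ∈ Icc 1 N, ∑ p ∈ n.primeFactors, g p n
      = ∑ p ∈ Icc 1 N, if p.Prime ∧ p ∣ n then g p n else 0 := by
    intro n hn
    rw [mem_Icc] at hn
    rw [← Finset.sum_filter]
    congr 1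
    ext p
    simp only [Nat.mem_primeFactors, mem_filter, mem_Icc]
    constructor
    · rintro ⟨hp, hd, -⟩
      exact ⟨⟨hp.one_lt.le.trans' (by norm_num), (Nat.le_of_dvd (by omega) hd).trans hn.2⟩, hp, hd⟩
    · rintro ⟨-, hp, hd⟩
      exact ⟨hp, hd, by omega⟩
  rw [Finset.sum_congr rfl step1, Finset.sum_comm, Finset.sum_filter]
  refine Finset.sum_congr rfl fun p _ => ?_
  by_cases hp : p.Prime <;> simp [hp, Finset.sum_filter]

private lemma card13 (N d : ℕ) : ((Icc 1 N).filter (fun n => d ∣ n)).card = N / d := by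
  rw [← Nat.Ioc_filter_dvd_card_eq_div, ← Finset.Icc_add_one_left_eq_Ioc, zero_add]

private lemma nu_count13 (N n p : ℕ) (pp : p.Prime) (h1 : 1 ≤ n) (h2 : n ≤ N) :
    n.factorization p = ((Icc 1 N).filter (fun i => p ^ i ∣ n)).card := by
  rw [Nat.factorization_eq_card_pow_dvd n pp]
  congr 1
  ext i
  simp only [mem_filter, Finset.mem_Ico, mem_Icc]
  constructor
  · rintro ⟨⟨hi1, -⟩, hd⟩
    have hle : p ^ i ≤ n := Nat.le_of_dvd (by omega) hd
    have hlt : i < 2 ^ i := Nat.lt_two_pow_self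
    have h2p : 2 ^ i ≤ p ^ i := Nat.pow_le_pow_left pp.two_le i
    exact ⟨⟨hi1, by omega⟩, hd⟩
  · rintro ⟨⟨hi1, -⟩, hd⟩
    have hle : p ^ i ≤ n := Nat.le_of_dvd (by omega) hd
    have hlt : i < 2 ^ i := Nat.lt_two_pow_self
    have h2p : 2 ^ i ≤ p ^ i := Nat.pow_le_pow_left pp.two_le i
    exact ⟨⟨hi1, by omega⟩, hd⟩

private lemma Tn13 (h : ℝ → ℝ) (N : ℕ) :
    ∑ n ∈ Icc 1 N, ∑ p ∈ n.primeFactors, h p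
      = ∑ p ∈ (Icc 1 N).filter Nat.Prime, h p * ((N / p : ℕ) : ℝ) := by
  rw [swap13 N (fun p _ => h p)]
  refine Finset.sum_congr rfl fun p _ => ?_
  rw [Finset.sum_const, card13, nsmul_eq_mul, mul_comm]

private lemma Sn13 (h : ℝ → ℝ) (N : ℕ) :
    ∑ n ∈ Icc 1 N, ∑ p ∈ n.primeFactors, (n.factorization p : ℝ) * h p
      = ∑ p ∈ (Icc 1 N).filter Nat.Prime, h p * ∑ k ∈ Icc 1 N, ((N / p ^ k : ℕ) : ℝ) := by
  rw [swap13 N (fun p n => (n.factorization p : ℝ) * h p)]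
  refine Finset.sum_congr rfl fun p hp => ?_
  rw [mem_filter] at hp
  have hfull : ∑ n ∈ (Icc 1 N).filter (fun n => p ∣ n), (n.factorization p : ℝ) * h p
      = ∑ n ∈ Icc 1 N, (n.factorization p : ℝ) * h p := by
    apply Finset.sum_filter_of_ne
    intro n _ hne
    by_contra hd
    rw [Nat.factorization_eq_zero_of_not_dvd hd] at hne
    simp at hne
  rw [hfull, ← Finset.sum_mul, mul_comm]
  congr 1
  have key : ∀ n ∈ Icc 1 N, (n.factorization p : ℝ)
      = ∑ i ∈ Icc 1 N, (if p ^ i ∣ n then (1:ℝ) else 0) := by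
    intro n hn
    rw [mem_Icc] at hn
    rw [nu_count13 N n p hp.2 hn.1 hn.2, Finset.sum_boole]
  rw [Finset.sum_congr rfl key, Finset.sum_comm]
  refine Finset.sum_congr rfl fun i _ => ?_
  rw [Finset.sum_boole, card13]

private lemma geom13 (p : ℕ) (hp : 2 ≤ p) (N : ℕ) :
    ∑ k ∈ Icc 2 N, ((1:ℝ)/p) ^ k ≤ 2 * (1/p)^2 := by
  have hp0 : (0:ℝ) < p := by positivity
  have hr0 : (0:ℝ) ≤ 1/p := by positivity
  have hr : (1:ℝ)/p ≤ 1/2 := by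
    apply div_le_div_of_nonneg_left one_pos.le two_pos
    exact_mod_cast hp
  have hr1 : (1:ℝ)/p < 1 := lt_of_le_of_lt hr (by norm_num)
  rw [← Finset.Ico_add_one_right_eq_Icc]
  calc ∑ k ∈ Ico 2 (N+1), ((1:ℝ)/p) ^ k ≤ (1/p)^2 / (1 - 1/p) :=
        geom_sum_Ico_le_of_lt_one hr0 hr1
    _ ≤ 2 * (1/p)^2 := by
        rw [div_le_iff₀ (by linarith)]
        nlinarith [sq_nonneg (1/(p:ℝ))]

private lemma Tn_le_Sn13 (h : ℝ → ℝ) (hh : ∀ p : ℕ, p.Prime → 0 ≤ h p) (N : ℕ) :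
    ∑ n ∈ Icc 1 N, ∑ p ∈ n.primeFactors, h p
      ≤ ∑ n ∈ Icc 1 N, ∑ p ∈ n.primeFactors, (n.factorization p : ℝ) * h p := by
  refine Finset.sum_le_sum fun n _ => Finset.sum_le_sum fun p hp => ?_
  rw [Nat.mem_primeFactors] at hp
  have h1 : 1 ≤ n.factorization p := by
    rw [← Nat.Prime.dvd_iff_one_le_factorization hp.1 hp.2.2]
    exact hp.2.1
  have : (1:ℝ) ≤ (n.factorization p : ℝ) := by exact_mod_cast h1
  nlinarith [hh p hp.1]
private lemma D_le13 (h : ℝ → ℝ) (hh : ∀ p : ℕ, p.Prime → 0 ≤ h p) (N : ℕ) (hN : 1 ≤ N) :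
    (∑ n ∈ Icc 1 N, ∑ p ∈ n.primeFactors, (n.factorization p : ℝ) * h p)
      - (∑ n ∈ Icc 1 N, ∑ p ∈ n.primeFactors, h p)
    ≤ (2 * N / Nat.sqrt N) *
      ∑ n ∈ Icc 1 (Nat.sqrt N), ∑ p ∈ n.primeFactors, (n.factorization p : ℝ) * h p := by
  set M := Nat.sqrt N with hMdef
  have hM1 : 1 ≤ M := Nat.sqrt_pos.mpr hN
  have hM0 : (0:ℝ) < M := by exact_mod_cast hM1
  have hN0 : (0:ℝ) < N := by exact_mod_cast hN
  rw [Sn13, Tn13, ← Finset.sum_sub_distrib]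
  have hsplit : Icc 1 N = insert 1 (Icc 2 N) := by
    ext k; simp only [mem_Icc, mem_insert]; omega
  have key : ∀ p ∈ (Icc 1 N).filter Nat.Prime,
      h p * (∑ k ∈ Icc 1 N, ((N / p ^ k : ℕ) : ℝ)) - h p * ((N / p : ℕ) : ℝ)
        ≤ if p ≤ M then (2 * N / M) * (h p * ((M / p : ℕ) : ℝ)) else 0 := by
    intro p hp
    rw [mem_filter, mem_Icc] at hp
    have hp2 : 2 ≤ p := hp.2.two_le
    have hp0 : (0:ℝ) < p := by positivity
    have hrw : h p * (∑ k ∈ Icc 1 N, ((N / p ^ k : ℕ) : ℝ)) - h p * ((N / p : ℕ) : ℝ)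
        = h p * ∑ k ∈ Icc 2 N, ((N / p ^ k : ℕ) : ℝ) := by
      rw [hsplit, Finset.sum_insert (by simp), pow_one]
      ring
    rw [hrw]
    by_cases hpM : p ≤ M
    · rw [if_pos hpM]
      have hq : (M:ℝ) / (2*p) ≤ ((M / p : ℕ) : ℝ) := by
        have hq1 : 1 ≤ M / p := (Nat.one_le_div_iff (by omega)).mpr hpM
        have := Nat.lt_mul_div_succ M (show 0 < p by omega)
        have hcast : (M:ℝ) < p * (M/p + 1 : ℕ) := by exact_mod_cast this
        have hq1' : (1:ℝ) ≤ ((M/p : ℕ):ℝ) := by exact_mod_cast hq1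
        rw [div_le_iff₀ (by positivity)]
        push_cast at hcast ⊢
        nlinarith
      have hsum : ∑ k ∈ Icc 2 N, ((N / p ^ k : ℕ) : ℝ) ≤ 2 * N * (1/p)^2 := by
        calc ∑ k ∈ Icc 2 N, ((N / p ^ k : ℕ) : ℝ)
            ≤ ∑ k ∈ Icc 2 N, (N:ℝ) * (1/p)^k := by
              refine Finset.sum_le_sum fun k _ => ?_
              have : ((N / p ^ k : ℕ) : ℝ) ≤ (N:ℝ)/((p:ℝ)^k) := by
                calc ((N / p ^ k : ℕ) : ℝ) ≤ (N:ℝ)/((p^k : ℕ):ℝ) := Nat.cast_div_le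
                _ = (N:ℝ)/((p:ℝ)^k) := by push_cast; ring
              calc ((N / p ^ k : ℕ) : ℝ) ≤ (N:ℝ)/((p:ℝ)^k) := this
              _ = (N:ℝ) * (1/p)^k := by rw [one_div, inv_pow]; ring
          _ = (N:ℝ) * ∑ k ∈ Icc 2 N, ((1:ℝ)/p)^k := by rw [Finset.mul_sum]
          _ ≤ (N:ℝ) * (2 * (1/p)^2) := by
              exact mul_le_mul_of_nonneg_left (geom13 p hp2 N) hN0.le
          _ = 2 * N * (1/p)^2 := by ring
      have hfinal : (2:ℝ) * N * (1/p)^2 ≤ (2 * N / M) * ((M / p : ℕ) : ℝ) := by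
        have step : (2 * N / (M:ℝ)) * ((M:ℝ)/(2*p)) = (N:ℝ)/p := by
          field_simp
        calc (2:ℝ) * N * (1/p)^2 ≤ (N:ℝ)/p := by
              have h2p : 2 * ((1:ℝ)/p) ≤ 1 := by
                rw [mul_one_div, div_le_one hp0]; exact_mod_cast hp2
              have hip : (0:ℝ) ≤ 1/p := by positivity
              have hgoal : (N:ℝ)/p = N * (1/p) := by ring
              rw [hgoal]
              nlinarith [mul_nonneg (mul_nonneg hN0.le hip) (sub_nonneg.mpr h2p)]
          _ = (2 * N / (M:ℝ)) * ((M:ℝ)/(2*p)) := step.symm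
          _ ≤ (2 * N / M) * ((M / p : ℕ) : ℝ) := by
              exact mul_le_mul_of_nonneg_left hq (by positivity)
      calc h p * ∑ k ∈ Icc 2 N, ((N / p ^ k : ℕ) : ℝ)
          ≤ h p * (2 * N * (1/p)^2) := mul_le_mul_of_nonneg_left hsum (hh p hp.2)
        _ = (2 * N) * ((1/p)^2 * h p) := by ring
        _ ≤ (2 * N / M) * (h p * ((M / p : ℕ) : ℝ)) := by
            have := mul_le_mul_of_nonneg_right hfinal (hh p hp.2)
            calc (2 * N) * ((1/(p:ℝ))^2 * h p) = (2 * N * (1/p)^2) * h p := by ring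
            _ ≤ ((2 * N / M) * ((M / p : ℕ) : ℝ)) * h p := this
            _ = (2 * N / M) * (h p * ((M / p : ℕ) : ℝ)) := by ring
    · rw [if_neg hpM]
      have hzero : ∀ k ∈ Icc 2 N, ((N / p ^ k : ℕ) : ℝ) = 0 := by
        intro k hk
        rw [mem_Icc] at hk
        have hNp : N < p ^ 2 := Nat.sqrt_lt'.mp (by omega)
        have : N < p ^ k := lt_of_lt_of_le hNp (Nat.pow_le_pow_right (by omega) hk.1)
        rw [Nat.div_eq_of_lt this, Nat.cast_zero]
      rw [Finset.sum_congr rfl hzero, Finset.sum_const, smul_zero, mul_zero]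
  calc ∑ p ∈ (Icc 1 N).filter Nat.Prime,
        (h p * (∑ k ∈ Icc 1 N, ((N / p ^ k : ℕ) : ℝ)) - h p * ((N / p : ℕ) : ℝ))
      ≤ ∑ p ∈ (Icc 1 N).filter Nat.Prime,
        (if p ≤ M then (2 * N / M) * (h p * ((M / p : ℕ) : ℝ)) else 0) :=
        Finset.sum_le_sum key
    _ = ∑ p ∈ ((Icc 1 N).filter Nat.Prime).filter (· ≤ M),
        (2 * N / M) * (h p * ((M / p : ℕ) : ℝ)) := (Finset.sum_filter _ _).symm
    _ ≤ ∑ p ∈ (Icc 1 M).filter Nat.Prime,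
        (2 * N / M) * (h p * ((M / p : ℕ) : ℝ)) := by
        apply Finset.sum_le_sum_of_subset_of_nonneg
        · intro p hp
          simp only [mem_filter, mem_Icc] at hp ⊢
          exact ⟨⟨hp.1.1.1, hp.2⟩, hp.1.2⟩
        · intro p hp _
          rw [mem_filter] at hp
          have := hh p hp.2
          positivity
    _ = (2 * N / M) * ∑ p ∈ (Icc 1 M).filter Nat.Prime, h p * ((M / p : ℕ) : ℝ) := by
        rw [Finset.mul_sum]
    _ = (2 * N / M) * ∑ n ∈ Icc 1 M, ∑ p ∈ n.primeFactors, h p := by rw [Tn13]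
    _ ≤ (2 * N / M) * ∑ n ∈ Icc 1 M, ∑ p ∈ n.primeFactors, (n.factorization p : ℝ) * h p := by
        apply mul_le_mul_of_nonneg_left (Tn_le_Sn13 h hh M) (by positivity)

private lemma log_ratio13 : Tendsto (fun x : ℝ => Real.log x / Real.log (2*x)) atTop (nhds 1) := by
  have h1 : Tendsto (fun y : ℝ => 1/(Real.log 2/y + 1)) atTop (nhds 1) := by
    have h2 : Tendsto (fun y : ℝ => Real.log 2/y + 1) atTop (nhds (0 + 1)) :=
      (tendsto_const_nhds.div_atTop tendsto_id).add tendsto_const_nhds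
    rw [zero_add] at h2
    have h4 : Tendsto (fun y : ℝ => (1:ℝ)/(Real.log 2/y + 1)) atTop (nhds (1/1)) :=
      (tendsto_const_nhds : Tendsto (fun _ : ℝ => (1:ℝ)) atTop (nhds 1)).div h2 one_ne_zero
    simpa using h4
  have h3 : Tendsto (fun x : ℝ => 1/(Real.log 2/Real.log x + 1)) atTop (nhds 1) :=
    h1.comp Real.tendsto_log_atTop
  apply h3.congr'
  filter_upwards [eventually_gt_atTop 1] with x hx
  have hlx : 0 < Real.log x := Real.log_pos hx
  rw [Real.log_mul (by norm_num) (by linarith)]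
  field_simp
private lemma doubling13 (L : ℝ → ℝ) (x₀ : ℝ) (hLpos : ∀ x, x₀ ≤ x → 0 < L x)
    (hLslow2 : Tendsto (fun x : ℝ => L (2*x)/L x) atTop (nhds 1))
    (ρ : ℝ) (S : ℝ → ℝ) (hSpos : ∀ x : ℝ, 2 ≤ x → 0 < S x) (C : ℝ) (hC : C ≠ 0)
    (hyp : Tendsto (fun x : ℝ => S x * Real.log x / (x^(ρ+1) * L x)) atTop (nhds C)) :
    Tendsto (fun x : ℝ => S (2*x)/S x) atTop (nhds ((2:ℝ)^(ρ+1))) := by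
  have h2x : Tendsto (fun x : ℝ => 2*x) atTop atTop :=
    Tendsto.const_mul_atTop two_pos tendsto_id
  have hyp2 : Tendsto (fun x : ℝ => S (2*x) * Real.log (2*x) / ((2*x)^(ρ+1) * L (2*x)))
      atTop (nhds C) := hyp.comp h2x
  have hratio : Tendsto (fun x : ℝ =>
      (S (2*x) * Real.log (2*x) / ((2*x)^(ρ+1) * L (2*x))) /
      (S x * Real.log x / (x^(ρ+1) * L x))) atTop (nhds 1) := by
    have := hyp2.div hyp hC
    rwa [div_self hC] at this
  have hmain : Tendsto (fun x : ℝ =>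
      ((S (2*x) * Real.log (2*x) / ((2*x)^(ρ+1) * L (2*x))) /
        (S x * Real.log x / (x^(ρ+1) * L x))
       * (Real.log x / Real.log (2*x)) * (L (2*x) / L x)) * (2:ℝ)^(ρ+1))
      atTop (nhds ((2:ℝ)^(ρ+1))) := by
    have := ((hratio.mul log_ratio13).mul hLslow2).mul_const ((2:ℝ)^(ρ+1))
    simpa using this
  apply hmain.congr'
  filter_upwards [eventually_ge_atTop (max x₀ 2)] with x hx
  rw [sup_le_iff] at hx
  have hx2 : (2:ℝ) ≤ x := hx.2
  have hx0 : (0:ℝ) < x := by linarith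
  have hlx : 0 < Real.log x := Real.log_pos (by linarith)
  have hl2x : 0 < Real.log (2*x) := Real.log_pos (by linarith)
  have hLx : 0 < L x := hLpos x hx.1
  have hL2x : 0 < L (2*x) := hLpos (2*x) (by linarith)
  have hSx : 0 < S x := hSpos x hx2
  have hS2x : 0 < S (2*x) := hSpos (2*x) (by linarith)
  have hrx : (0:ℝ) < x^(ρ+1) := Real.rpow_pos_of_pos hx0 _
  have hr2 : (0:ℝ) < (2:ℝ)^(ρ+1) := Real.rpow_pos_of_pos two_pos _
  have hexp : (2*x)^(ρ+1) = (2:ℝ)^(ρ+1) * x^(ρ+1) := Real.mul_rpow (by norm_num) hx0.le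
  rw [hexp]
  field_simp
private lemma pow_rpow13 (γ : ℝ) (n : ℕ) : ((2:ℝ)^γ)^n = ((2:ℝ)^n)^γ := by
  rw [← Real.rpow_natCast ((2:ℝ)^γ) n, ← Real.rpow_mul (by norm_num : (0:ℝ) ≤ 2),
    mul_comm, Real.rpow_mul (by norm_num : (0:ℝ) ≤ 2), Real.rpow_natCast]

private lemma power_bounds13 (S : ℝ → ℝ) (hSmono : Monotone S) (x₁ : ℝ) (hx₁ : 2 ≤ x₁)
    (hSx₁ : 0 < S x₁) (γ β : ℝ) (hβ : 0 ≤ β) (hγ : 0 ≤ γ)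
    (hub : ∀ x, x₁ ≤ x → S (2*x) ≤ 2^γ * S x)
    (hlb : ∀ x, x₁ ≤ x → 2^β * S x ≤ S (2*x)) :
    ∀ x, x₁ ≤ x → S x ≤ (S x₁ * (2/x₁)^γ) * x^γ ∧ (S x₁ / (2*x₁)^β) * x^β ≤ S x := by
  have hx₁0 : (0:ℝ) < x₁ := by linarith
  have key : ∀ n : ℕ, S (2^n * x₁) ≤ ((2:ℝ)^γ)^n * S x₁ ∧ ((2:ℝ)^β)^n * S x₁ ≤ S (2^n * x₁) := by
    intro n
    induction n with
    | zero => simp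
    | succ n ih =>
      have hge : x₁ ≤ 2^n * x₁ := le_mul_of_one_le_left hx₁0.le (one_le_pow₀ one_le_two)
      have h1 : (2:ℝ)^(n+1) * x₁ = 2 * (2^n * x₁) := by ring
      constructor
      · rw [h1, pow_succ]
        calc S (2 * (2^n * x₁)) ≤ 2^γ * S (2^n * x₁) := hub _ hge
          _ ≤ 2^γ * (((2:ℝ)^γ)^n * S x₁) :=
            mul_le_mul_of_nonneg_left ih.1 (Real.rpow_nonneg (by norm_num) _)
          _ = ((2:ℝ)^γ)^n * 2^γ * S x₁ := by ring
      · rw [h1, pow_succ]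
        calc ((2:ℝ)^β)^n * 2^β * S x₁ = 2^β * (((2:ℝ)^β)^n * S x₁) := by ring
          _ ≤ 2^β * S (2^n * x₁) :=
            mul_le_mul_of_nonneg_left ih.2 (Real.rpow_nonneg (by norm_num) _)
          _ ≤ S (2 * (2^n * x₁)) := hlb _ hge
  intro x hx
  have hx0 : (0:ℝ) < x := by linarith
  have hx1' : (1:ℝ) ≤ x/x₁ := (one_le_div hx₁0).mpr hx
  obtain ⟨n, hn1, hn2⟩ := exists_nat_pow_near hx1' one_lt_two
  have hxle : x ≤ 2^(n+1) * x₁ := by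
    rw [div_lt_iff₀ hx₁0] at hn2; linarith
  have hxge : 2^n * x₁ ≤ x := by
    rw [le_div_iff₀ hx₁0] at hn1; linarith
  constructor
  · calc S x ≤ S (2^(n+1) * x₁) := hSmono hxle
      _ ≤ ((2:ℝ)^γ)^(n+1) * S x₁ := (key (n+1)).1
      _ = ((2:ℝ)^(n+1))^γ * S x₁ := by rw [pow_rpow13]
      _ ≤ ((2/x₁) * x)^γ * S x₁ := by
          apply mul_le_mul_of_nonneg_right _ hSx₁.le
          apply Real.rpow_le_rpow (by positivity) _ hγ
          have : (2:ℝ)^(n+1) = 2 * 2^n := by ring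
          rw [this]
          calc (2:ℝ) * 2^n ≤ 2 * (x/x₁) := by nlinarith
            _ = (2/x₁) * x := by field_simp
      _ = (S x₁ * (2/x₁)^γ) * x^γ := by
          rw [Real.mul_rpow (by positivity) hx0.le]; ring
  · calc (S x₁ / (2*x₁)^β) * x^β = (x/(2*x₁))^β * S x₁ := by
          rw [Real.div_rpow hx0.le (by positivity)]; ring
      _ ≤ ((2:ℝ)^n)^β * S x₁ := by
          apply mul_le_mul_of_nonneg_right _ hSx₁.le
          apply Real.rpow_le_rpow (by positivity) _ hβ
          rw [div_le_iff₀ (by positivity)]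
          calc x ≤ 2^(n+1) * x₁ := hxle
            _ = 2^n * (2*x₁) := by ring
      _ = ((2:ℝ)^β)^n * S x₁ := by rw [pow_rpow13]
      _ ≤ S (2^n * x₁) := (key n).2
      _ ≤ S x := hSmono hxge

noncomputable def S13 (h : ℝ → ℝ) (x : ℝ) : ℝ :=
  ∑ n ∈ Icc 1 ⌊x⌋₊, ∑ p ∈ n.primeFactors, (n.factorization p : ℝ) * h p

noncomputable def T13 (h : ℝ → ℝ) (x : ℝ) : ℝ :=
  ∑ n ∈ Icc 1 ⌊x⌋₊, ∑ p ∈ n.primeFactors, h p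

private lemma Sinner_nonneg13 (h : ℝ → ℝ) (hh : ∀ p : ℕ, p.Prime → 0 ≤ h p) (n : ℕ) :
    0 ≤ ∑ p ∈ n.primeFactors, (n.factorization p : ℝ) * h p :=
  Finset.sum_nonneg fun p hp =>
    mul_nonneg (Nat.cast_nonneg _) (hh p (Nat.prime_of_mem_primeFactors hp))

private lemma T13_nonneg (h : ℝ → ℝ) (hh : ∀ p : ℕ, p.Prime → 0 ≤ h p) (x : ℝ) :
    0 ≤ T13 h x :=
  Finset.sum_nonneg fun n _ => Finset.sum_nonneg fun p hp =>
    hh p (Nat.prime_of_mem_primeFactors hp)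

private lemma T13_le_S13 (h : ℝ → ℝ) (hh : ∀ p : ℕ, p.Prime → 0 ≤ h p) (x : ℝ) :
    T13 h x ≤ S13 h x := Tn_le_Sn13 h hh _

private lemma S13_mono (h : ℝ → ℝ) (hh : ∀ p : ℕ, p.Prime → 0 ≤ h p) :
    Monotone (S13 h) := by
  intro x y hxy
  apply Finset.sum_le_sum_of_subset_of_nonneg
  · exact Finset.Icc_subset_Icc_right (Nat.floor_le_floor hxy)
  · exact fun n _ _ => Sinner_nonneg13 h hh n

private lemma S13_pos (h : ℝ → ℝ) (hh : ∀ p : ℕ, p.Prime → 0 ≤ h p)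
    (h2 : 0 < h 2) (x : ℝ) (hx : 2 ≤ x) : 0 < S13 h x := by
  have hN : 2 ≤ ⌊x⌋₊ := Nat.le_floor (by exact_mod_cast hx)
  have hmem : (2:ℕ) ∈ Icc 1 ⌊x⌋₊ := by rw [mem_Icc]; omega
  have hterm : ∑ p ∈ (2:ℕ).primeFactors, ((2:ℕ).factorization p : ℝ) * h p = h 2 := by
    rw [Nat.Prime.primeFactors Nat.prime_two, Finset.sum_singleton,
      Nat.Prime.factorization_self Nat.prime_two]
    norm_num
  calc (0:ℝ) < h 2 := h2
    _ = ∑ p ∈ (2:ℕ).primeFactors, ((2:ℕ).factorization p : ℝ) * h p := hterm.symm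
    _ ≤ S13 h x :=
      Finset.single_le_sum (fun n _ => Sinner_nonneg13 h hh n) hmem

private lemma D13_le (h : ℝ → ℝ) (hh : ∀ p : ℕ, p.Prime → 0 ≤ h p) (x : ℝ) (hx : 1 ≤ x) :
    S13 h x - T13 h x
      ≤ (2 * (⌊x⌋₊:ℝ) / (Nat.sqrt ⌊x⌋₊ : ℝ)) * S13 h ((Nat.sqrt ⌊x⌋₊ : ℕ) : ℝ) := by
  have hfloor : ⌊((Nat.sqrt ⌊x⌋₊ : ℕ) : ℝ)⌋₊ = Nat.sqrt ⌊x⌋₊ := Nat.floor_natCast _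
  have hN1 : 1 ≤ ⌊x⌋₊ := Nat.le_floor (by exact_mod_cast hx)
  unfold S13 T13
  rw [hfloor]
  exact D_le13 h hh ⌊x⌋₊ hN1

private lemma block13 (h : ℝ → ℝ) (hh : ∀ p : ℕ, p.Prime → 0 ≤ h p) (x₁ γ β A a : ℝ) (hx₁2 : 2 ≤ x₁) (hγ0 : 0 ≤ γ)
    (hA0 : 0 < A) (ha0 : 0 < a)
    (hpb : ∀ x, x₁ ≤ x → S13 h x ≤ A * x^γ ∧ a * x^β ≤ S13 h x)
    (x : ℝ) (hx4 : 4*x₁^2 ≤ x) (hx16 : 16 ≤ x) :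
    (S13 h x - T13 h x)/S13 h x ≤ (4*A/a) * x^((1+γ)/2 - β) := by
  have hxx₁ : x₁ ≤ x := by nlinarith
  have hx0 : (0:ℝ) < x := by linarith
  have hx1 : (1:ℝ) ≤ x := by linarith
  have hs0 : 0 < Real.sqrt x := Real.sqrt_pos.mpr hx0
  have hs : Real.sqrt x * Real.sqrt x = x := Real.mul_self_sqrt hx0.le
  have hsx4 : (4:ℝ) ≤ Real.sqrt x := by
    nlinarith [hs, hs0]
  have hsx2x₁ : 2*x₁ ≤ Real.sqrt x := by
    nlinarith [hs, hs0]
  set s : ℝ := Real.sqrt x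
  set N : ℕ := ⌊x⌋₊ with hNdef
  set M : ℕ := Nat.sqrt N with hMdef
  have hMr0' : (0:ℝ) ≤ (M:ℝ) := Nat.cast_nonneg _
  have hNx : (N:ℝ) ≤ x := Nat.floor_le hx0.le
  have hNgt : x - 1 < (N:ℝ) := Nat.sub_one_lt_floor x
  have hM2 : (M:ℝ) * (M:ℝ) ≤ (N:ℝ) := by exact_mod_cast Nat.sqrt_le N
  have hMup : (N:ℝ) < ((M:ℝ)+1)^2 := by
    have := Nat.lt_succ_sqrt' N
    have h2 : (N:ℝ) < ((Nat.sqrt N + 1 : ℕ) : ℝ)^2 := by exact_mod_cast this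
    push_cast at h2
    exact h2
  have hMleS : (M:ℝ) ≤ s := by
    nlinarith [hs, hs0]
  have hMgeS : s / 2 ≤ (M:ℝ) := by nlinarith [hs, hs0]
  have hMrx₁ : x₁ ≤ (M:ℝ) := by linarith
  have hMr0 : (0:ℝ) < (M:ℝ) := by linarith
  have hD := D13_le h hh x hx1
  have hSM : S13 h (M:ℝ) ≤ A * (M:ℝ)^γ := (hpb (M:ℝ) hMrx₁).1
  have hMrγ : ((M:ℝ))^γ ≤ s^γ := Real.rpow_le_rpow hMr0.le hMleS hγ0
  have hquot : 2*(N:ℝ)/(M:ℝ) ≤ 4*s := by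
    have h1 : 2*(N:ℝ)/(M:ℝ) ≤ 2*x/(s/2) :=
      div_le_div₀ (by linarith) (by linarith) (by linarith) hMgeS
    have h2 : 2*x/(s/2) = 4*s := by
      rw [div_div_eq_mul_div, div_eq_iff (ne_of_gt hs0)]
      nlinarith
    linarith
  have hDb : S13 h x - T13 h x ≤ 4*A*x^((1+γ)/2) := by
    have hSMr0 : 0 ≤ S13 h (M:ℝ) := le_trans (T13_nonneg h hh _) (T13_le_S13 h hh _)
    calc S13 h x - T13 h x ≤ (2*(N:ℝ)/(M:ℝ)) * S13 h (M:ℝ) := hD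
      _ ≤ (4*s) * (A * s^γ) := by
          apply mul_le_mul hquot (hSM.trans (by
            exact mul_le_mul_of_nonneg_left hMrγ hA0.le)) hSMr0 (by positivity)
      _ = 4*A*(s * s^γ) := by ring
      _ = 4*A*x^((1+γ)/2) := by
          rw [show s = x ^ ((1:ℝ)/2) from Real.sqrt_eq_rpow x, ← Real.rpow_mul hx0.le,
            ← Real.rpow_add hx0, show (1:ℝ)/2 + 1/2*γ = (1+γ)/2 by ring]
  have hSlow : a * x^β ≤ S13 h x := (hpb x hxx₁).2
  have hxβ0 : (0:ℝ) < a * x^β := mul_pos ha0 (Real.rpow_pos_of_pos hx0 _)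
  calc (S13 h x - T13 h x) / S13 h x ≤ (4*A*x^((1+γ)/2)) / (a * x^β) :=
        div_le_div₀ (by positivity) hDb hxβ0 hSlow
    _ = (4*A/a) * (x^((1+γ)/2) / x^β) := by ring
    _ = (4*A/a) * x^((1+γ)/2 - β) := by rw [← Real.rpow_sub hx0]


/-- For `L` slowly varying, `ρ > 0` and `h : [2,∞) → (0,∞)`
non-decreasing: if `∑_{n≤x} ∑_{p^ν||n} ν·h(p) = (ζ(ρ+1)/(ρ+1) + o(1))·x^{ρ+1}L(x)/log x`,
then also `∑_{n≤x} ∑_{p|n} h(p) = (ζ(ρ+1)/(ρ+1) + o(1))·x^{ρ+1}L(x)/log x`. -/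
theorem statement13
    (x₀ : ℝ) (hx₀ : 0 < x₀) (L : ℝ → ℝ)
    (hLpos : ∀ x, x₀ ≤ x → 0 < L x)
    (hLcont : ContinuousOn L (Set.Ici x₀))
    (hLslow : ∀ c : ℝ, 0 < c →
      Tendsto (fun x : ℝ => L (c * x) / L x) atTop (nhds 1))
    (ρ : ℝ) (hρ : 0 < ρ)
    (h : ℝ → ℝ) (hpos : ∀ x : ℝ, 2 ≤ x → 0 < h x)
    (hmono : ∀ x y : ℝ, 2 ≤ x → x ≤ y → h x ≤ h y)
    (hyp : Tendsto (fun x : ℝ =>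
        (∑ n ∈ Finset.Icc 1 ⌊x⌋₊,
            ∑ p ∈ n.primeFactors, (n.factorization p : ℝ) * h p) *
          Real.log x / (x ^ (ρ + 1) * L x))
      atTop (nhds ((riemannZeta ((ρ : ℂ) + 1)).re / (ρ + 1)))) :
    Tendsto (fun x : ℝ =>
        (∑ n ∈ Finset.Icc 1 ⌊x⌋₊, ∑ p ∈ n.primeFactors, h p) *
          Real.log x / (x ^ (ρ + 1) * L x))
      atTop (nhds ((riemannZeta ((ρ : ℂ) + 1)).re / (ρ + 1))) := by
  set C : ℝ := (riemannZeta ((ρ : ℂ) + 1)).re / (ρ + 1) with hCdef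
  have hh : ∀ p : ℕ, p.Prime → 0 ≤ h p := fun p hp =>
    (hpos p (by exact_mod_cast hp.two_le)).le
  have h2pos : 0 < h 2 := hpos 2 le_rfl
  have hypS : Tendsto (fun x : ℝ => S13 h x * Real.log x / (x ^ (ρ + 1) * L x))
      atTop (nhds C) := hyp
  show Tendsto (fun x : ℝ => T13 h x * Real.log x / (x ^ (ρ + 1) * L x)) atTop (nhds C)
  by_cases hC : C = 0
  · rw [hC] at hypS ⊢
    apply tendsto_of_tendsto_of_tendsto_of_le_of_le' tendsto_const_nhds hypS
    · filter_upwards [eventually_ge_atTop (max x₀ 1)] with x hx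
      rw [sup_le_iff] at hx
      exact div_nonneg (mul_nonneg (T13_nonneg h hh x) (Real.log_nonneg hx.2))
        (mul_nonneg (Real.rpow_nonneg (by linarith) _) (hLpos x hx.1).le)
    · filter_upwards [eventually_ge_atTop (max x₀ 1)] with x hx
      rw [sup_le_iff] at hx
      have hd : 0 < x ^ (ρ+1) * L x :=
        mul_pos (Real.rpow_pos_of_pos (by linarith) _) (hLpos x hx.1)
      exact div_le_div_of_nonneg_right
        (mul_le_mul_of_nonneg_right (T13_le_S13 h hh x) (Real.log_nonneg hx.2)) hd.le
  · -- main case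
    set γ : ℝ := ρ + 1 + ρ/4 with hγdef
    set β : ℝ := ρ + 1 - ρ/4 with hβdef
    have hγ0 : 0 ≤ γ := by rw [hγdef]; linarith
    have hβ0 : 0 ≤ β := by rw [hβdef]; linarith
    have hSpos : ∀ x : ℝ, 2 ≤ x → 0 < S13 h x := fun x hx => S13_pos h hh h2pos x hx
    have hdb : Tendsto (fun x : ℝ => S13 h (2*x) / S13 h x) atTop (nhds ((2:ℝ)^(ρ+1))) :=
      doubling13 L x₀ hLpos (hLslow 2 two_pos) ρ (S13 h) hSpos C hC hypS
    have hub' : ∀ᶠ x in atTop, S13 h (2*x) / S13 h x < 2^γ :=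
      hdb.eventually_lt_const ((Real.rpow_lt_rpow_left_iff one_lt_two).mpr
        (by rw [hγdef]; linarith))
    have hlb' : ∀ᶠ x in atTop, (2:ℝ)^β < S13 h (2*x) / S13 h x :=
      hdb.eventually_const_lt ((Real.rpow_lt_rpow_left_iff one_lt_two).mpr
        (by rw [hβdef]; linarith))
    obtain ⟨x₁', hx₁'⟩ := eventually_atTop.mp (hub'.and hlb')
    set x₁ : ℝ := max x₁' 2 with hx₁def
    have hx₁2 : (2:ℝ) ≤ x₁ := le_max_right _ _
    have hub : ∀ x, x₁ ≤ x → S13 h (2*x) ≤ 2^γ * S13 h x := by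
      intro x hx
      have hSx := hSpos x (hx₁2.trans hx)
      have := (hx₁' x ((le_max_left _ _).trans hx)).1
      rw [div_lt_iff₀ hSx] at this
      linarith
    have hlb : ∀ x, x₁ ≤ x → 2^β * S13 h x ≤ S13 h (2*x) := by
      intro x hx
      have hSx := hSpos x (hx₁2.trans hx)
      have := (hx₁' x ((le_max_left _ _).trans hx)).2
      rw [lt_div_iff₀ hSx] at this
      linarith
    have hpb := power_bounds13 (S13 h) (S13_mono h hh) x₁ hx₁2 (hSpos x₁ hx₁2)
      γ β hβ0 hγ0 hub hlb
    set A : ℝ := S13 h x₁ * (2/x₁)^γ with hAdef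
    set a : ℝ := S13 h x₁ / (2*x₁)^β with hadef
    have hA0 : 0 < A := mul_pos (hSpos x₁ hx₁2)
      (Real.rpow_pos_of_pos (by positivity : (0:ℝ) < 2/x₁) _)
    have ha0 : 0 < a := div_pos (hSpos x₁ hx₁2)
      (Real.rpow_pos_of_pos (by positivity : (0:ℝ) < 2*x₁) _)
    have hG : Tendsto (fun x : ℝ => (S13 h x - T13 h x) / S13 h x) atTop (nhds 0) := by
      have hupper : Tendsto (fun x : ℝ => (4*A/a) * x^(-(ρ/8))) atTop (nhds 0) := by
        simpa using (tendsto_rpow_neg_atTop (by linarith : (0:ℝ) < ρ/8)).const_mul (4*A/a)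
      apply tendsto_of_tendsto_of_tendsto_of_le_of_le' tendsto_const_nhds hupper
      · filter_upwards [eventually_ge_atTop (2:ℝ)] with x hx
        exact div_nonneg (sub_nonneg.mpr (T13_le_S13 h hh x)) (hSpos x hx).le
      · filter_upwards [eventually_ge_atTop (max (4*x₁^2) 16)] with x hx
        rw [sup_le_iff] at hx
        have hb := block13 h hh x₁ γ β A a hx₁2 hγ0 hA0 ha0 hpb x hx.1 hx.2
        rwa [show (1+γ)/2 - β = -(ρ/8) by rw [hγdef, hβdef]; ring] at hb
    have final := hypS.sub (hG.mul hypS)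
    rw [zero_mul, sub_zero] at final
    apply final.congr'
    filter_upwards [eventually_ge_atTop (2:ℝ)] with x hx
    have hSx : S13 h x ≠ 0 := (hSpos x hx).ne'
    have key : ∀ q : ℝ, S13 h x * q - ((S13 h x - T13 h x)/S13 h x)*(S13 h x * q)
        = T13 h x * q := by
      intro q
      field_simp
      ring
    calc S13 h x * Real.log x / (x ^ (ρ + 1) * L x)
          - (S13 h x - T13 h x) / S13 h x * (S13 h x * Real.log x / (x ^ (ρ + 1) * L x))
        = S13 h x * (Real.log x / (x ^ (ρ + 1) * L x))
          - (S13 h x - T13 h x) / S13 h x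
            * (S13 h x * (Real.log x / (x ^ (ρ + 1) * L x))) := by
          rw [mul_div_assoc]
      _ = T13 h x * (Real.log x / (x ^ (ρ + 1) * L x)) := key _
      _ = T13 h x * Real.log x / (x ^ (ρ + 1) * L x) := by rw [mul_div_assoc]
end
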